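/- arXiv:1309.5111 — 6 statements merged into one kernel-verified Lean document; each statement's English description precedes it below -/
import Mathlib

section
/- Let ξ be a bounded piecewise continuous function on [−h, ∞) whose discontinuity points lie in a sequence {t_k} with uniformly almost periodic differences. Suppose that for every sequence of reals (τ_k) with τ_k → ∞ there exists a subsequence (τ_{k_j}) such that the functions t ↦ ξ(t + τ_{k_j}) W-converge on [0, ∞). Then for every ε > 0 there exists T(ε) > 0 such that the set of numbers τ with the property that ‖ξ(t + τ) − ξ(t)‖ < ε for all t ≥ T(ε) satisfying t + τ ≥ T(ε), |t − t_k| > ε and |t + τ − t_k| > ε for all k, is relatively dense in ℝ (there is L > 0 such that every interval of length L contains such a τ). -/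
open Filter Set Topology

/-- A set of integers is relatively dense if some block length `N` works:
every block of `N` consecutive integers meets the set. -/
def RelDenseZ (P : Set ℤ) : Prop :=
  ∃ N : ℕ, 0 < N ∧ ∀ k : ℤ, ∃ p ∈ P, k ≤ p ∧ p < k + N

/-- The two-sided sequence `t` is strictly increasing, unbounded in both directions,
and has uniformly almost periodic differences. -/
def UAPD (t : ℤ → ℝ) : Prop :=
  StrictMono t ∧ Tendsto t atTop atTop ∧ Tendsto t atBot atBot ∧
  ∀ ε > (0 : ℝ), ∃ P : Set ℤ, RelDenseZ P ∧
    ∀ p ∈ P, ∀ j k : ℤ, |t (k + p + j) - t (k + p) - (t (k + j) - t k)| < ε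

/-- `φ` is piecewise continuous on `[a, ∞)` with discontinuity points among `{t k}`:
continuous on each `(t k, t (k+1)] ∩ [a, ∞)`, left continuous on `(a, ∞)`, with finite
right limits at the points `t k ≥ a`. -/
def PCOn {E : Type*} [NormedAddCommGroup E] (t : ℤ → ℝ) (a : ℝ) (φ : ℝ → E) : Prop :=
  (∀ k : ℤ, ContinuousOn φ (Set.Ioc (t k) (t (k + 1)) ∩ Set.Ici a)) ∧
  (∀ x : ℝ, a < x → Tendsto φ (nhdsWithin x (Set.Iio x)) (nhds (φ x))) ∧
  (∀ k : ℤ, a ≤ t k → ∃ L : E, Tendsto φ (nhdsWithin (t k) (Set.Ioi (t k))) (nhds L))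

/-- W-convergence on `[0, ∞)` of the sequence of shifts `ξ(· + τ j)` to some piecewise
continuous limit `g` with discontinuity points `p i`: the discontinuity points
`t (i + α j) - τ j` of the shifts converge to `p i` uniformly in `i`, and the shifted
functions converge to `g` uniformly away from the points `p i`. -/
def ShiftsWConverge {E : Type*} [NormedAddCommGroup E] (t : ℤ → ℝ) (ξ : ℝ → E)
    (τ : ℕ → ℝ) : Prop :=
  ∃ (p : ℤ → ℝ) (g : ℝ → E) (α : ℕ → ℤ),
    StrictMono p ∧
    (∀ k : ℤ, ContinuousOn g (Set.Ioc (p k) (p (k + 1)) ∩ Set.Ici 0)) ∧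
    (∀ ε > (0 : ℝ), ∃ N : ℕ, ∀ j ≥ N, ∀ i : ℤ, |t (i + α j) - τ j - p i| < ε) ∧
    (∀ ε > (0 : ℝ), ∃ N : ℕ, ∀ j ≥ N, ∀ s : ℝ, 0 ≤ s →
      (∀ i : ℤ, ε < |s - p i|) → ‖ξ (s + τ j) - g s‖ < ε)

/-- If `ξ` is bounded and piecewise continuous on `[-h, ∞)` with discontinuity points among
a sequence `{t k}` with uniformly almost periodic differences and all its sequences of
shifts to `+∞` have W-convergent subsequences on `[0, ∞)`, then for every `ε > 0` there is
`T(ε) > 0` such that the set of `ε`-"almost periods beyond `T(ε)`" of `ξ` is relatively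
dense in `ℝ`. -/
theorem relDense_almost_periods {n : ℕ} (h : ℝ) (hh : 0 < h) (t : ℤ → ℝ) (hT : UAPD t)
    (ξ : ℝ → Fin n → ℝ) (hpc : PCOn t (-h) ξ)
    (B : ℝ) (hbd : ∀ s : ℝ, -h ≤ s → ‖ξ s‖ ≤ B)
    (hcomp : ∀ τ : ℕ → ℝ, Tendsto τ atTop atTop →
      ∃ φ : ℕ → ℕ, StrictMono φ ∧ ShiftsWConverge t ξ (fun j => τ (φ j))) :
    ∀ ε > (0 : ℝ), ∃ T > (0 : ℝ), ∃ L > (0 : ℝ), ∀ a : ℝ, ∃ τ ∈ Set.Icc a (a + L),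
      ∀ s : ℝ, T ≤ s → T ≤ s + τ →
        (∀ k : ℤ, ε < |s - t k|) → (∀ k : ℤ, ε < |s + τ - t k|) →
        ‖ξ (s + τ) - ξ s‖ < ε := by
  intro ε hε
  by_contra hcon
  push_neg at hcon
  -- `Q T τ'` : τ' is a "bad" shift at level T
  set Q : ℝ → ℝ → Prop := fun T τ' => ∃ s, T ≤ s ∧ T ≤ s + τ' ∧
    (∀ k : ℤ, ε < |s - t k|) ∧ (∀ k : ℤ, ε < |s + τ' - t k|) ∧
    ε ≤ ‖ξ (s + τ') - ξ s‖ with hQdef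
  have hQsymm : ∀ T τ', Q T τ' → Q T (-τ') := by
    rintro T τ' ⟨s, h1, h2, h3, h4, h5⟩
    refine ⟨s + τ', h2, by simpa using h1, h4, ?_, ?_⟩
    · intro k; have := h3 k; rw [show s + τ' + -τ' - t k = s - t k by ring]; exact this
    · rw [show s + τ' + -τ' = s by ring, ← norm_neg]
      rw [show ξ s - ξ (s + τ') = -(ξ (s + τ') - ξ s) by abel] at *
      simpa using h5
  have hQmono : ∀ T T' τ', T' ≤ T → Q T τ' → Q T' τ' := by
    rintro T T' τ' hle ⟨s, h1, h2, h3, h4, h5⟩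
    exact ⟨s, hle.trans h1, hle.trans h2, h3, h4, h5⟩
  have hQzero : ∀ T : ℝ, ¬ Q T 0 := by
    rintro T ⟨s, -, -, -, -, h5⟩
    simp at h5; linarith
  have H : ∀ m : ℝ, ∃ a : ℝ, 0 < m → ∀ τ' ∈ Set.Icc a (a + (2*m+2)), Q m τ' := by
    intro m
    by_cases hm : 0 < m
    · obtain ⟨a, ha⟩ := hcon m hm (2*m+2) (by linarith)
      exact ⟨a, fun _ => ha⟩
    · exact ⟨0, fun hm' => absurd hm' hm⟩
  choose A hA using H
  set f : ℕ → ℝ := fun k => Nat.rec (1:ℝ) (fun _ fk => |A fk + (fk + 1)|) k with hfdef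
  have hfs : ∀ k, f (k+1) = |A (f k) + (f k + 1)| := fun k => rfl
  have hstep : ∀ k, 1 ≤ f k →
      f k + 1 < f (k+1) ∧ ∀ d : ℝ, 0 < d → d ≤ f k → Q (f k) (f (k+1) - d) := by
    intro k hk
    have hm : (0:ℝ) < f k := by linarith
    have ha := hA (f k) hm
    have hnz : 0 < A (f k) ∨ A (f k) + (2 * f k + 2) < 0 := by
      by_contra hcc
      push_neg at hcc
      exact hQzero (f k) (ha 0 ⟨hcc.1, by linarith [hcc.2]⟩)
    rcases hnz with hp | hn
    · have he : f (k+1) = A (f k) + (f k + 1) := by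
        rw [hfs k, abs_of_pos (by linarith)]
      refine ⟨by rw [he]; linarith, fun d hd0 hdm => ?_⟩
      have hmem : f (k+1) - d ∈ Set.Icc (A (f k)) (A (f k) + (2 * f k + 2)) := by
        rw [he]; simp only [Set.mem_Icc]; constructor <;> linarith
      exact ha _ hmem
    · have he : f (k+1) = -(A (f k) + (f k + 1)) := by
        rw [hfs k, abs_of_neg (by linarith)]
      refine ⟨by rw [he]; linarith, fun d hd0 hdm => ?_⟩
      have hmem : -(f (k+1) - d) ∈ Set.Icc (A (f k)) (A (f k) + (2 * f k + 2)) := by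
        rw [he]; simp only [Set.mem_Icc]; constructor <;> linarith
      have := hQsymm (f k) _ (ha _ hmem)
      rwa [neg_neg] at this
  have hpos : ∀ k, 1 ≤ f k := by
    intro k; induction k with
    | zero => exact le_refl 1
    | succ k ih => linarith [(hstep k ih).1]
  have hmsucc : ∀ k, f k ≤ f (k+1) := fun k => by linarith [(hstep k (hpos k)).1]
  have hmonof : Monotone f := monotone_nat_of_le_succ hmsucc
  have hgrow : ∀ k : ℕ, (k : ℝ) + 1 ≤ f k := by
    intro k; induction k with
    | zero => simpa using hpos 0
    | succ k ih => push_cast; linarith [(hstep k (hpos k)).1]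
  have htend : Tendsto f atTop atTop := by
    refine tendsto_atTop_mono hgrow ?_
    exact tendsto_atTop_add_const_right _ 1 tendsto_natCast_atTop_atTop
  have hQpair : ∀ i j : ℕ, i < j → Q (f i) (f j - f i) := by
    intro i j hij
    obtain ⟨k, rfl⟩ : ∃ k, j = k + 1 := ⟨j - 1, by omega⟩
    have hik : i ≤ k := by omega
    exact hQmono _ _ _ (hmonof hik)
      ((hstep k (hpos k)).2 (f i) (by linarith [hpos i]) (hmonof hik))
  obtain ⟨φ, hφ, p, g, α, -, -, hd, hc⟩ := hcomp f htend
  obtain ⟨N1, hN1⟩ := hd (ε/2) (by linarith)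
  obtain ⟨N2, hN2⟩ := hc (ε/2) (by linarith)
  set N := max N1 N2 with hN
  have hφlt : φ N < φ (N+1) := hφ (Nat.lt_succ_self N)
  obtain ⟨s, hs1, -, hs3, -, hs5⟩ := hQpair (φ N) (φ (N+1)) hφlt
  set u := s - f (φ N) with hu
  have hu0 : 0 ≤ u := by rw [hu]; linarith
  have huaway : ∀ i : ℤ, ε/2 < |u - p i| := by
    intro i
    have h1 := hs3 (i + α N)
    have h2 := hN1 N (le_max_left _ _) i
    have hxy : s - t (i + α N) = (u - p i) - (t (i + α N) - f (φ N) - p i) := by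
      rw [hu]; ring
    have h3 : |s - t (i + α N)| ≤ |u - p i| + |t (i + α N) - f (φ N) - p i| := by
      rw [hxy]; exact abs_sub _ _
    linarith
  have e1 := hN2 N (le_max_right _ _) u hu0 huaway
  have e2 := hN2 (N+1) ((le_max_right _ _).trans (Nat.le_succ N)) u hu0 huaway
  rw [show u + f (φ N) = s by rw [hu]; ring] at e1
  rw [show u + f (φ (N+1)) = s + (f (φ (N+1)) - f (φ N)) by rw [hu]; ring] at e2
  have hsplit : ξ (s + (f (φ (N+1)) - f (φ N))) - ξ s
      = (ξ (s + (f (φ (N+1)) - f (φ N))) - g u) + (g u - ξ s) := by abel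
  have hlt : ‖ξ (s + (f (φ (N+1)) - f (φ N))) - ξ s‖ < ε := by
    calc ‖ξ (s + (f (φ (N+1)) - f (φ N))) - ξ s‖
        ≤ ‖ξ (s + (f (φ (N+1)) - f (φ N))) - g u‖ + ‖g u - ξ s‖ := by
          rw [hsplit]; exact norm_add_le _ _
      _ < ε := by rw [norm_sub_rev (g u)]; linarith
  linarith
end

section
/- Let h > 0 and let α, γ, x_m : ℝ → ℝ be piecewise continuous functions (left-continuous, with finitely many discontinuities in each bounded interval and finite one-sided limits), with x_m bounded on bounded intervals. Define x_i(t) = ∫_{t−h}^{t} α(s) x_m(s) e^{−∫_s^{t} γ(ξ)dξ} ds. Then at every point t such that α and x_m are continuous at t and at t − h and γ is continuous at t, the function x_i is differentiable at t and x_i′(t) = α(t) x_m(t) − γ(t) x_i(t) − α(t−h) e^{−∫_{t−h}^{t} γ(s)ds} x_m(t−h). -/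
open Filter Set Topology MeasureTheory

/-- A real function is piecewise continuous: continuous off a set `D` which is finite in
every bounded interval, left continuous everywhere, with finite right limits at points
of `D`. -/
def PiecewiseContinuousFn (f : ℝ → ℝ) : Prop :=
  ∃ D : Set ℝ, (∀ a b : ℝ, (D ∩ Set.Icc a b).Finite) ∧
    (∀ x : ℝ, x ∉ D → ContinuousAt f x) ∧
    (∀ x : ℝ, Tendsto f (nhdsWithin x (Set.Iio x)) (nhds (f x))) ∧
    (∀ x ∈ D, ∃ L : ℝ, Tendsto f (nhdsWithin x (Set.Ioi x)) (nhds L))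

lemma PiecewiseContinuousFn.countableD {f : ℝ → ℝ} {D : Set ℝ}
    (hfin : ∀ a b : ℝ, (D ∩ Set.Icc a b).Finite) : D.Countable := by
  have : D ⊆ ⋃ n : ℤ, (D ∩ Set.Icc (n : ℝ) (n + 1)) := by
    intro x hx
    exact Set.mem_iUnion.2 ⟨⌊x⌋, hx, Int.floor_le x, by
      have := Int.lt_floor_add_one x; linarith⟩
  exact (Set.countable_iUnion fun n => (hfin _ _).countable).mono this

lemma PiecewiseContinuousFn.aestronglyMeasurable {f : ℝ → ℝ}
    (hf : PiecewiseContinuousFn f) : AEStronglyMeasurable f volume := by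
  obtain ⟨D, hfin, hcont, -, -⟩ := hf
  have hD : D.Countable := PiecewiseContinuousFn.countableD (f:=f) hfin
  have hco : ContinuousOn f Dᶜ := fun x hx => (hcont x hx).continuousWithinAt
  have h1 : AEMeasurable f (volume.restrict Dᶜ) :=
    hco.aemeasurable hD.measurableSet.compl
  have h2 : volume.restrict Dᶜ = volume :=
    Measure.restrict_eq_self_of_ae_mem (measure_eq_zero_iff_ae_notMem.1 (hD.measure_zero _))
  rw [h2] at h1
  exact h1.aestronglyMeasurable

lemma PiecewiseContinuousFn.bddOn {f : ℝ → ℝ} (hf : PiecewiseContinuousFn f)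
    (a b : ℝ) : ∃ M : ℝ, ∀ x ∈ Set.Icc a b, |f x| ≤ M := by
  obtain ⟨D, hfin, hcont, hleft, hright⟩ := hf
  have key : ∀ x : ℝ, ∃ M : ℝ, ∀ᶠ y in 𝓝 x, |f y| ≤ M := by
    intro x
    by_cases hx : x ∈ D
    · obtain ⟨L, hL⟩ := hright x hx
      refine ⟨max (|f x| + 1) (|L| + 1), ?_⟩
      have h1 : ∀ᶠ y in 𝓝[<] x, |f y| ≤ max (|f x| + 1) (|L| + 1) := by
        filter_upwards [hleft x (Metric.ball_mem_nhds _ one_pos)] with y hy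
        simp only [Set.mem_preimage, Metric.mem_ball, Real.dist_eq] at hy
        have : |f y| ≤ |f x| + 1 := by
          calc |f y| = |(f y - f x) + f x| := by ring_nf
            _ ≤ |f y - f x| + |f x| := abs_add_le _ _
            _ ≤ |f x| + 1 := by linarith
        exact this.trans (le_max_left _ _)
      have h2 : ∀ᶠ y in 𝓝[>] x, |f y| ≤ max (|f x| + 1) (|L| + 1) := by
        filter_upwards [hL (Metric.ball_mem_nhds _ one_pos)] with y hy
        simp only [Set.mem_preimage, Metric.mem_ball, Real.dist_eq] at hy
        have : |f y| ≤ |L| + 1 := by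
          calc |f y| = |(f y - L) + L| := by ring_nf
            _ ≤ |f y - L| + |L| := abs_add_le _ _
            _ ≤ |L| + 1 := by linarith
        exact this.trans (le_max_right _ _)
      have h3 : ∀ᶠ y in pure x, |f y| ≤ max (|f x| + 1) (|L| + 1) := by
        simp only [eventually_pure]
        exact le_trans (by linarith [abs_nonneg (f x)]) (le_max_left _ _)
      have hsplit : 𝓝 x = 𝓝[<] x ⊔ (pure x ⊔ 𝓝[>] x) := by
        rw [← nhdsLT_sup_nhdsGE x]
        congr 1
        rw [show Set.Ici x = {x} ∪ Set.Ioi x by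
              ext y; simp [Set.mem_Ici, le_iff_lt_or_eq, or_comm, eq_comm],
          nhdsWithin_union, nhdsWithin_singleton]
      rw [hsplit]
      exact Filter.eventually_sup.2 ⟨h1, Filter.eventually_sup.2 ⟨h3, h2⟩⟩
    · refine ⟨|f x| + 1, ?_⟩
      filter_upwards [hcont x hx (Metric.ball_mem_nhds _ one_pos)] with y hy
      simp only [Set.mem_preimage, Metric.mem_ball, Real.dist_eq] at hy
      calc |f y| = |(f y - f x) + f x| := by ring_nf
        _ ≤ |f y - f x| + |f x| := abs_add_le _ _
        _ ≤ |f x| + 1 := by linarith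
  choose M hM using key
  obtain ⟨t, -, ht⟩ := isCompact_Icc.elim_nhds_subcover
    (fun x => {y | |f y| ≤ M x}) (fun x _ => hM x)
  refine ⟨∑ x ∈ t, |M x|, fun y hy => ?_⟩
  obtain ⟨x, hxt, hyx⟩ := Set.mem_iUnion₂.1 (ht hy)
  calc |f y| ≤ M x := hyx
    _ ≤ |M x| := le_abs_self _
    _ ≤ ∑ x ∈ t, |M x| := Finset.single_le_sum (f := fun x => |M x|) (fun i _ => abs_nonneg _) hxt

lemma PiecewiseContinuousFn.intervalIntegrable {f : ℝ → ℝ}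
    (hf : PiecewiseContinuousFn f) (a b : ℝ) : IntervalIntegrable f volume a b := by
  obtain ⟨M, hM⟩ := hf.bddOn (min a b) (max a b)
  rw [intervalIntegrable_iff]
  apply Measure.integrableOn_of_bounded (M := M) measure_Ioc_lt_top.ne
    hf.aestronglyMeasurable
  refine ae_restrict_of_forall_mem measurableSet_uIoc fun x hx => ?_
  rw [Real.norm_eq_abs]
  exact hM x (Set.uIoc_subset_uIcc hx)

set_option maxHeartbeats 1000000 in
/-- **The integral representation (20) solves the immature equation (11).**
If `x_i(t) = ∫_{t-h}^t α(s) x_m(s) e^{-∫_s^t γ} ds`, then at every point where `α` and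
`x_m` are continuous at `t` and `t - h` and `γ` is continuous at `t`, one has
`x_i'(t) = α(t)x_m(t) - γ(t)x_i(t) - α(t-h) e^{-∫_{t-h}^t γ} x_m(t-h)`. -/
theorem immature_integral_representation (h : ℝ) (hh : 0 < h) (α γ xm : ℝ → ℝ)
    (hαpc : PiecewiseContinuousFn α) (hγpc : PiecewiseContinuousFn γ)
    (hxmpc : PiecewiseContinuousFn xm)
    (hbdd : ∀ a b : ℝ, ∃ M : ℝ, ∀ s ∈ Set.Icc a b, |xm s| ≤ M)
    (xi : ℝ → ℝ)
    (hxi : ∀ s : ℝ, xi s = ∫ u in (s - h)..s, α u * xm u * Real.exp (-∫ r in u..s, γ r)) :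
    ∀ s : ℝ, ContinuousAt α s → ContinuousAt α (s - h) →
      ContinuousAt xm s → ContinuousAt xm (s - h) → ContinuousAt γ s →
      HasDerivAt xi
        (α s * xm s - γ s * xi s -
          α (s - h) * Real.exp (-∫ u in (s - h)..s, γ u) * xm (s - h)) s := by
  have hγm : MeasureTheory.AEStronglyMeasurable γ MeasureTheory.volume :=
    hγpc.aestronglyMeasurable
  have hαm : MeasureTheory.AEStronglyMeasurable α MeasureTheory.volume :=
    hαpc.aestronglyMeasurable
  have hxmm : MeasureTheory.AEStronglyMeasurable xm MeasureTheory.volume :=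
    hxmpc.aestronglyMeasurable
  have hγint : ∀ a b : ℝ, IntervalIntegrable γ MeasureTheory.volume a b :=
    fun a b => hγpc.intervalIntegrable a b
  have hαbdd : ∀ a b : ℝ, ∃ M : ℝ, ∀ s ∈ Set.Icc a b, |α s| ≤ M :=
    fun a b => hαpc.bddOn a b
  intro s hαs hαsh hxms hxmsh hγs
  set G : ℝ → ℝ := fun t => ∫ r in (0:ℝ)..t, γ r with hGdef
  have hGcont : Continuous G := intervalIntegral.continuous_primitive hγint 0
  set f : ℝ → ℝ := fun u => α u * xm u * Real.exp (G u) with hfdef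
  have hexpGcont : Continuous fun u => Real.exp (G u) := Real.continuous_exp.comp hGcont
  have hfmeas : AEStronglyMeasurable f volume :=
    (hαm.mul hxmm).mul hexpGcont.aestronglyMeasurable
  have hfint : ∀ a b : ℝ, IntervalIntegrable f volume a b := by
    intro a b
    obtain ⟨M1, hM1⟩ := hαbdd (min a b) (max a b)
    obtain ⟨M2, hM2⟩ := hbdd (min a b) (max a b)
    obtain ⟨M3, hM3⟩ := isCompact_Icc.exists_bound_of_continuousOn
      (s := Set.Icc (min a b) (max a b)) hexpGcont.continuousOn
    rw [intervalIntegrable_iff]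
    refine Measure.integrableOn_of_bounded (M := M1 * M2 * M3) measure_Ioc_lt_top.ne
      hfmeas ?_
    refine ae_restrict_of_forall_mem measurableSet_uIoc fun x hx => ?_
    have hx' : x ∈ Set.Icc (min a b) (max a b) := Set.uIoc_subset_uIcc hx
    have h1 := hM1 x hx'
    have h2 := hM2 x hx'
    have h3 := hM3 x hx'
    rw [Real.norm_eq_abs] at h3 ⊢
    have : |f x| = |α x| * |xm x| * |Real.exp (G x)| := by
      simp [hfdef, abs_mul]
    rw [this]
    exact mul_le_mul (mul_le_mul h1 h2 (abs_nonneg _) ((abs_nonneg _).trans h1)) h3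
      (abs_nonneg _) (mul_nonneg ((abs_nonneg _).trans h1) ((abs_nonneg _).trans h2))
  set H : ℝ → ℝ := fun t => ∫ u in (0:ℝ)..t, f u with hHdef
  have hγsub : ∀ u r : ℝ, (∫ x in r..u, γ x) = G u - G r := fun u r =>
    (intervalIntegral.integral_interval_sub_left (hγint 0 u) (hγint 0 r)).symm
  have hxieq : xi = fun u => Real.exp (-G u) * (H u - H (u - h)) := by
    funext u
    rw [hxi u]
    have hHsub : H u - H (u - h) = ∫ x in (u - h)..u, f x :=
      intervalIntegral.integral_interval_sub_left (hfint 0 u) (hfint 0 (u - h))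
    rw [hHsub, ← intervalIntegral.integral_const_mul]
    apply intervalIntegral.integral_congr
    intro r _
    show α r * xm r * Real.exp (-∫ x in r..u, γ x) =
      Real.exp (-G u) * (α r * xm r * Real.exp (G r))
    rw [hγsub u r, neg_sub, Real.exp_sub, Real.exp_neg]
    field_simp
  have hfconts : ContinuousAt f s := (hαs.mul hxms).mul hexpGcont.continuousAt
  have hfcontsh : ContinuousAt f (s - h) := (hαsh.mul hxmsh).mul hexpGcont.continuousAt
  have hHd : HasDerivAt H (f s) s :=
    intervalIntegral.integral_hasDerivAt_right (hfint 0 s)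
      hfmeas.stronglyMeasurableAtFilter hfconts
  have hHdsh : HasDerivAt H (f (s - h)) (s - h) :=
    intervalIntegral.integral_hasDerivAt_right (hfint 0 (s - h))
      hfmeas.stronglyMeasurableAtFilter hfcontsh
  have hHd2 : HasDerivAt (fun u => H (u - h)) (f (s - h)) s := by
    have := hHdsh.comp s ((hasDerivAt_id s).sub_const h)
    simpa [Function.comp_def] using this
  have hGd : HasDerivAt G (γ s) s :=
    intervalIntegral.integral_hasDerivAt_right (hγint 0 s)
      hγm.stronglyMeasurableAtFilter hγs
  have hexp : HasDerivAt (fun u => Real.exp (-G u)) (Real.exp (-G s) * (-γ s)) s :=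
    (hGd.neg).exp
  have hmul : HasDerivAt (fun u => Real.exp (-G u) * (H u - H (u - h)))
      (Real.exp (-G s) * (-γ s) * (H s - H (s - h)) + Real.exp (-G s) * (f s - f (s - h))) s :=
    hexp.mul (hHd.sub hHd2)
  rw [hxieq]
  convert hmul using 1
  rw [hγsub s (s - h), hfdef]
  simp only
  rw [neg_sub, Real.exp_sub, Real.exp_neg]
  field_simp
  ring
end

section
/- Let h > 0, σ ∈ ℝ, let (t_k)_{k∈ℤ} be a strictly increasing sequence with t_k → ±∞ and finitely many t_k in each bounded interval, let d_k > −1 for all k, and let α, β, γ : ℝ → ℝ be piecewise continuous with discontinuities among {t_k}. Define ω(t) = (∏_{0 ≤ t_k < t} (1+d_k)) e^{−σt} for t ≥ 0 and ω(t) = (∏_{t ≤ t_k < 0}(1+d_k))^{−1} e^{−σt} for t < 0, A(t) = (∏_{t−h ≤ t_k < t} (1+d_k))^{−1} α(t−h) exp(σh − ∫_{t−h}^{t} γ(s)ds), and C(t) = ω(t) β(t). If v : ℝ → ℝ is continuous and satisfies v′(t) = A(t) v(t−h) + σ v(t) − C(t) v(t)² for every t ∉ {t_k}, then the function x_m(t)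 := ω(t) v(t) is left-continuous, satisfies x_m′(t) = α(t−h) e^{−∫_{t−h}^{t} γ(s)ds} x_m(t−h) − β(t) x_m(t)² for every t ∉ {t_k}, and satisfies x_m(t_k + 0) = (1 + d_k) x_m(t_k) for every k ∈ ℤ. -/
open Filter Set Topology

/-- `φ` is piecewise continuous with discontinuities among `{t k}`. -/
def PCWith (t : ℤ → ℝ) (φ : ℝ → ℝ) : Prop :=
  (∀ k : ℤ, ContinuousOn φ (Set.Ioc (t k) (t (k + 1)))) ∧
  (∀ x : ℝ, Tendsto φ (nhdsWithin x (Set.Iio x)) (nhds (φ x))) ∧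
  (∀ k : ℤ, ∃ L : ℝ, Tendsto φ (nhdsWithin (t k) (Set.Ioi (t k))) (nhds L))

/-- The product `∏_{a ≤ t_k < b} (1 + d_k)` over impulse points in `[a, b)`. -/
noncomputable def impProd (t d : ℤ → ℝ) (a b : ℝ) : ℝ :=
  ∏ᶠ k ∈ {k : ℤ | t k ∈ Set.Ico a b}, (1 + d k)

/-- `ω(s) = (∏_{0 ≤ t_k < s} (1 + d_k)) e^{-σ s}`, interpreted as
`(∏_{s ≤ t_k < 0} (1 + d_k))⁻¹ e^{-σ s}` for `s < 0`. -/
noncomputable def omegaFun (t d : ℤ → ℝ) (σ : ℝ) (s : ℝ) : ℝ :=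
  (if 0 ≤ s then impProd t d 0 s else (impProd t d s 0)⁻¹) * Real.exp (-(σ * s))

/-- `A(s) = (∏_{s-h ≤ t_k < s} (1 + d_k))⁻¹ α(s-h) exp(σ h - ∫_{s-h}^s γ)`. -/
noncomputable def Afun (h : ℝ) (t d : ℤ → ℝ) (σ : ℝ) (α γ : ℝ → ℝ) (s : ℝ) : ℝ :=
  (impProd t d (s - h) s)⁻¹ * α (s - h) * Real.exp (σ * h - ∫ u in (s - h)..s, γ u)

/-- `C(s) = ω(s) β(s)`. -/
noncomputable def Cfun (t d : ℤ → ℝ) (σ : ℝ) (β : ℝ → ℝ) (s : ℝ) : ℝ :=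
  omegaFun t d σ s * β s

/-- The step-product part of `ω`. -/
noncomputable def Pfun (t d : ℤ → ℝ) (s : ℝ) : ℝ :=
  if 0 ≤ s then impProd t d 0 s else (impProd t d s 0)⁻¹

lemma omega_eq (t d : ℤ → ℝ) (σ s : ℝ) :
    omegaFun t d σ s = Pfun t d s * Real.exp (-(σ * s)) := rfl

lemma impProd_pos (t d : ℤ → ℝ) (hd : ∀ k, -1 < d k)
    (htfin : ∀ a b : ℝ, {k : ℤ | t k ∈ Set.Icc a b}.Finite) (a b : ℝ) :
    0 < impProd t d a b := by
  have hfin : {k : ℤ | t k ∈ Set.Ico a b}.Finite :=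
    (htfin a b).subset fun k hk => ⟨hk.1, hk.2.le⟩
  rw [impProd, finprod_mem_eq_finite_toFinset_prod _ hfin]
  exact Finset.prod_pos fun k _ => by linarith [hd k]

lemma impProd_one (t d : ℤ → ℝ) {a b : ℝ} (hnone : ∀ j, t j ∉ Set.Ico a b) :
    impProd t d a b = 1 := by
  rw [impProd]
  have : {k : ℤ | t k ∈ Set.Ico a b} = (∅ : Set ℤ) := by
    ext k; simpa using hnone k
  rw [this, finprod_mem_empty]

lemma impProd_mul (t d : ℤ → ℝ)
    (htfin : ∀ a b : ℝ, {k : ℤ | t k ∈ Set.Icc a b}.Finite)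
    {a b c : ℝ} (hab : a ≤ b) (hbc : b ≤ c) :
    impProd t d a b * impProd t d b c = impProd t d a c := by
  have h1 : {k : ℤ | t k ∈ Set.Ico a b}.Finite :=
    (htfin a b).subset fun k hk => ⟨hk.1, hk.2.le⟩
  have h2 : {k : ℤ | t k ∈ Set.Ico b c}.Finite :=
    (htfin b c).subset fun k hk => ⟨hk.1, hk.2.le⟩
  have hdisj : Disjoint {k : ℤ | t k ∈ Set.Ico a b} {k : ℤ | t k ∈ Set.Ico b c} := by
    rw [Set.disjoint_left]
    intro k hk1 hk2
    exact absurd hk2.1 (not_le.2 hk1.2)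
  have hun : {k : ℤ | t k ∈ Set.Ico a b} ∪ {k : ℤ | t k ∈ Set.Ico b c}
      = {k : ℤ | t k ∈ Set.Ico a c} := by
    ext k
    simp only [Set.mem_union, Set.mem_setOf_eq]
    rw [← Set.Ico_union_Ico_eq_Ico hab hbc, Set.mem_union]
  rw [impProd, impProd, impProd, ← finprod_mem_union hdisj h1 h2, hun]

lemma Pfun_mul (t d : ℤ → ℝ) (hd : ∀ k, -1 < d k)
    (htfin : ∀ a b : ℝ, {k : ℤ | t k ∈ Set.Icc a b}.Finite)
    {a b : ℝ} (hab : a ≤ b) :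
    Pfun t d b = Pfun t d a * impProd t d a b := by
  rcases le_or_gt 0 a with ha | ha
  · rw [Pfun, Pfun, if_pos (ha.trans hab), if_pos ha, impProd_mul t d htfin ha hab]
  · rcases le_or_gt 0 b with hb | hb
    · rw [Pfun, Pfun, if_pos hb, if_neg (not_le.2 ha)]
      rw [← impProd_mul t d htfin ha.le hb,
        inv_mul_cancel_left₀ (impProd_pos t d hd htfin a 0).ne']
    · rw [Pfun, Pfun, if_neg (not_le.2 hb), if_neg (not_le.2 ha),
        ← impProd_mul t d htfin hab hb.le, mul_inv]
      field_simp
      rw [← div_div, div_right_comm, div_self (impProd_pos t d hd htfin a b).ne']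

lemma Pfun_eq_of_no_imp (t d : ℤ → ℝ) (hd : ∀ k, -1 < d k)
    (htfin : ∀ a b : ℝ, {k : ℤ | t k ∈ Set.Icc a b}.Finite)
    {a b : ℝ} (hab : a ≤ b) (hnone : ∀ j, t j ∉ Set.Ico a b) :
    Pfun t d b = Pfun t d a := by
  rw [Pfun_mul t d hd htfin hab, impProd_one t d hnone, mul_one]

lemma exists_greatest_lt (t : ℤ → ℝ) (htmono : StrictMono t)
    (httop : Tendsto t atTop atTop) (htbot : Tendsto t atBot atBot) (s : ℝ) :
    ∃ k : ℤ, t k < s ∧ ∀ j : ℤ, t j < s → j ≤ k := by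
  obtain ⟨m, hm⟩ := (httop.eventually_ge_atTop s).exists
  obtain ⟨n, hn⟩ := (htbot.eventually_le_atBot (s - 1)).exists
  exact Int.exists_greatest_of_bdd
    ⟨m, fun z hz => (htmono.lt_iff_lt.1 (lt_of_lt_of_le hz hm)).le⟩
    ⟨n, by linarith⟩

lemma no_imp_left (t : ℤ → ℝ) (htmono : StrictMono t)
    (httop : Tendsto t atTop atTop) (htbot : Tendsto t atBot atBot) (s : ℝ) :
    ∃ ε > 0, ∀ j, t j ∉ Set.Ioo (s - ε) s := by
  obtain ⟨k, hk, hmax⟩ := exists_greatest_lt t htmono httop htbot s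
  refine ⟨s - t k, by linarith, fun j hj => ?_⟩
  have h1 : t k < t j := by have := hj.1; linarith
  have h2 := hmax j hj.2
  have := htmono.lt_iff_lt.1 h1
  omega

lemma no_imp_around (t : ℤ → ℝ) (htmono : StrictMono t)
    (httop : Tendsto t atTop atTop) (htbot : Tendsto t atBot atBot)
    (s : ℝ) (hs : ∀ k : ℤ, s ≠ t k) :
    ∃ ε > 0, ∀ j, t j ∉ Set.Ioo (s - ε) (s + ε) := by
  obtain ⟨k, hk, hmax⟩ := exists_greatest_lt t htmono httop htbot s
  have hk1 : s < t (k + 1) := by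
    rcases lt_trichotomy (t (k + 1)) s with h | h | h
    · have := hmax _ h; omega
    · exact absurd h.symm (hs (k + 1))
    · exact h
  refine ⟨min (s - t k) (t (k + 1) - s), by
    have := lt_min (by linarith : (0:ℝ) < s - t k) (by linarith : (0:ℝ) < t (k+1) - s)
    simpa using this, fun j hj => ?_⟩
  have hε1 : min (s - t k) (t (k + 1) - s) ≤ s - t k := min_le_left _ _
  have hε2 : min (s - t k) (t (k + 1) - s) ≤ t (k + 1) - s := min_le_right _ _
  have h1 : t k < t j := by have := hj.1; linarith
  have h2 : t j < t (k + 1) := by have := hj.2; linarith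
  have := htmono.lt_iff_lt.1 h1
  have := htmono.lt_iff_lt.1 h2
  omega

/-- **Change of variables (21).** If `v` is a continuous solution of the impulse-free delay
equation (22) `v' = A v(·-h) + σ v - C v²`, then `x_m := ω v` is left continuous,
satisfies the mature-population equation (12) away from impulse points, and satisfies the
jump condition (13) `x_m(t_k + 0) = (1 + d_k) x_m(t_k)` at every impulse point. -/
theorem change_of_variables (h σ : ℝ) (hh : 0 < h)
    (t : ℤ → ℝ) (htmono : StrictMono t)
    (httop : Tendsto t atTop atTop) (htbot : Tendsto t atBot atBot)
    (htfin : ∀ a b : ℝ, {k : ℤ | t k ∈ Set.Icc a b}.Finite)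
    (d : ℤ → ℝ) (hd : ∀ k : ℤ, -1 < d k)
    (α β γ : ℝ → ℝ) (hα : PCWith t α) (hβ : PCWith t β) (hγ : PCWith t γ)
    (v : ℝ → ℝ) (hv : Continuous v)
    (hode : ∀ s : ℝ, (∀ k : ℤ, s ≠ t k) →
      HasDerivAt v
        (Afun h t d σ α γ s * v (s - h) + σ * v s - Cfun t d σ β s * v s ^ 2) s) :
    (∀ s : ℝ, Tendsto (fun r => omegaFun t d σ r * v r)
        (nhdsWithin s (Set.Iio s)) (nhds (omegaFun t d σ s * v s))) ∧
    (∀ s : ℝ, (∀ k : ℤ, s ≠ t k) →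
      HasDerivAt (fun r => omegaFun t d σ r * v r)
        (α (s - h) * Real.exp (-∫ u in (s - h)..s, γ u) *
            (omegaFun t d σ (s - h) * v (s - h)) -
          β s * (omegaFun t d σ s * v s) ^ 2) s) ∧
    (∀ k : ℤ, Tendsto (fun r => omegaFun t d σ r * v r)
        (nhdsWithin (t k) (Set.Ioi (t k)))
        (nhds ((1 + d k) * (omegaFun t d σ (t k) * v (t k))))) := by
  have hcont : ∀ c : ℝ, Continuous fun r : ℝ => c * Real.exp (-(σ * r)) * v r := by
    intro c
    exact ((continuous_const.mul ((continuous_const.mul continuous_id).neg.rexp)).mul hv)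
  refine ⟨?_, ?_, ?_⟩
  · -- left continuity
    intro s
    obtain ⟨ε, hε, hno⟩ := no_imp_left t htmono httop htbot s
    have hmem : Set.Ioo (s - ε) s ∈ nhdsWithin s (Set.Iio s) :=
      Ioo_mem_nhdsLT_of_mem ⟨by linarith, le_refl s⟩
    have heq : ∀ᶠ r in nhdsWithin s (Set.Iio s),
        Pfun t d s * Real.exp (-(σ * r)) * v r = omegaFun t d σ r * v r := by
      filter_upwards [hmem] with r hr
      have hP : Pfun t d s = Pfun t d r :=
        Pfun_eq_of_no_imp t d hd htfin hr.2.le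
          (fun j hj => hno j ⟨lt_of_lt_of_le hr.1 hj.1, hj.2⟩)
      rw [omega_eq, hP]
    have hten : Tendsto (fun r => Pfun t d s * Real.exp (-(σ * r)) * v r)
        (nhdsWithin s (Set.Iio s)) (nhds (omegaFun t d σ s * v s)) := by
      rw [omega_eq]
      exact ((hcont (Pfun t d s)).tendsto s).mono_left nhdsWithin_le_nhds
    exact hten.congr' heq
  · -- the ODE away from impulse points
    intro s hs
    obtain ⟨ε, hε, hno⟩ := no_imp_around t htmono httop htbot s hs
    have hPloc : ∀ r ∈ Set.Ioo (s - ε) (s + ε), Pfun t d r = Pfun t d s := by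
      intro r hr
      rcases le_or_gt r s with hrs | hrs
      · exact (Pfun_eq_of_no_imp t d hd htfin hrs
          (fun j hj => hno j ⟨lt_of_lt_of_le hr.1 hj.1, lt_of_lt_of_le hj.2 (by linarith)⟩)).symm
      · refine Pfun_eq_of_no_imp t d hd htfin hrs.le (fun j hj => ?_)
        rcases eq_or_lt_of_le hj.1 with hje | hje
        · exact hs j hje
        · exact hno j ⟨by linarith, lt_trans hj.2 hr.2⟩
    have heq : (fun r => Pfun t d s * Real.exp (-(σ * r)) * v r)
        =ᶠ[nhds s] fun r => omegaFun t d σ r * v r := by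
      filter_upwards [Ioo_mem_nhds (by linarith : s - ε < s) (by linarith : s < s + ε)]
        with r hr
      rw [omega_eq, hPloc r hr]
    -- derivative of the smooth representative
    have hexp : HasDerivAt (fun r : ℝ => Real.exp (-(σ * r)))
        (Real.exp (-(σ * s)) * (-σ)) s := by
      have : HasDerivAt (fun r : ℝ => -(σ * r)) (-σ) s := by
        have := ((hasDerivAt_id s).const_mul σ).neg
        simp only [mul_one] at this
        exact this
      exact this.exp
    have hder : HasDerivAt (fun r => Pfun t d s * Real.exp (-(σ * r)) * v r)
        (Pfun t d s * (Real.exp (-(σ * s)) * (-σ)) * v s +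
          Pfun t d s * Real.exp (-(σ * s)) *
            (Afun h t d σ α γ s * v (s - h) + σ * v s - Cfun t d σ β s * v s ^ 2)) s :=
      (hexp.const_mul (Pfun t d s)).mul (hode s hs)
    have hder' := hder.congr_of_eventuallyEq heq.symm
    convert hder' using 1
    · rfl
    · rfl
    have hkey : omegaFun t d σ s * Afun h t d σ α γ s =
        α (s - h) * Real.exp (-∫ u in (s - h)..s, γ u) * omegaFun t d σ (s - h) := by
      rw [omega_eq, omega_eq, Afun, Pfun_mul t d hd htfin (by linarith : s - h ≤ s)]
      have hQ : impProd t d (s - h) s ≠ 0 := (impProd_pos t d hd htfin _ _).ne'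
      have h1 : Real.exp (-(σ * s)) * Real.exp (σ * h) = Real.exp (-(σ * (s - h))) := by
        rw [← Real.exp_add]; ring_nf
      have h2 : Real.exp (σ * h - ∫ u in (s - h)..s, γ u) =
          Real.exp (σ * h) * Real.exp (-∫ u in (s - h)..s, γ u) := by
        rw [← Real.exp_add]; ring_nf
      calc Pfun t d (s - h) * impProd t d (s - h) s * Real.exp (-(σ * s)) *
            ((impProd t d (s - h) s)⁻¹ * α (s - h) *
              Real.exp (σ * h - ∫ u in (s - h)..s, γ u))
          = Pfun t d (s - h) * (impProd t d (s - h) s * (impProd t d (s - h) s)⁻¹) *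
              (Real.exp (-(σ * s)) * Real.exp (σ * h)) * α (s - h) *
              Real.exp (-∫ u in (s - h)..s, γ u) := by rw [h2]; ring
        _ = α (s - h) * Real.exp (-∫ u in (s - h)..s, γ u) *
              (Pfun t d (s - h) * Real.exp (-(σ * (s - h)))) := by
            rw [mul_inv_cancel₀ hQ, h1]; ring
    have homC : omegaFun t d σ s * Cfun t d σ β s * v s ^ 2 =
        β s * (omegaFun t d σ s * v s) ^ 2 := by
      rw [Cfun]; ring
    calc α (s - h) * Real.exp (-∫ u in (s - h)..s, γ u) *
            (omegaFun t d σ (s - h) * v (s - h)) -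
          β s * (omegaFun t d σ s * v s) ^ 2
        = omegaFun t d σ s * Afun h t d σ α γ s * v (s - h) -
            omegaFun t d σ s * Cfun t d σ β s * v s ^ 2 := by rw [hkey, homC]; ring
      _ = _ := by rw [omega_eq]; ring
  · -- the jump condition
    intro k
    have hlt : t k < t (k + 1) := htmono (by omega)
    have hmem : Set.Ioo (t k) (t (k + 1)) ∈ nhdsWithin (t k) (Set.Ioi (t k)) :=
      Ioo_mem_nhdsGT_of_mem ⟨le_refl _, hlt⟩
    have heq : ∀ᶠ r in nhdsWithin (t k) (Set.Ioi (t k)),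
        ((1 + d k) * Pfun t d (t k)) * Real.exp (-(σ * r)) * v r
          = omegaFun t d σ r * v r := by
      filter_upwards [hmem] with r hr
      have himp : impProd t d (t k) r = 1 + d k := by
        have hset : {j : ℤ | t j ∈ Set.Ico (t k) r} = {k} := by
          ext j
          simp only [Set.mem_setOf_eq, Set.mem_Ico, Set.mem_singleton_iff]
          constructor
          · rintro ⟨h1, h2⟩
            have hjk : k ≤ j := htmono.le_iff_le.1 h1
            have hjk2 : j < k + 1 := htmono.lt_iff_lt.1 (lt_trans h2 hr.2)
            omega
          · rintro rfl
            exact ⟨le_refl _, hr.1⟩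
        rw [impProd, hset, finprod_mem_singleton]
      have hP : Pfun t d r = Pfun t d (t k) * (1 + d k) := by
        rw [Pfun_mul t d hd htfin hr.1.le, himp]
      rw [omega_eq, hP]; ring
    have hten : Tendsto (fun r => ((1 + d k) * Pfun t d (t k)) * Real.exp (-(σ * r)) * v r)
        (nhdsWithin (t k) (Set.Ioi (t k)))
        (nhds ((1 + d k) * (omegaFun t d σ (t k) * v (t k)))) := by
      have := ((hcont ((1 + d k) * Pfun t d (t k))).tendsto (t k)).mono_left
        (nhdsWithin_le_nhds (s := Set.Ioi (t k)))
      convert this using 2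
      rw [omega_eq]; ring
    exact hten.congr' heq
end

section
/- Let h > 0, σ ∈ ℝ, and let A, C : [0, ∞) → ℝ be piecewise continuous with 0 < A^L ≤ A(t) ≤ A^M, 0 < C^L ≤ C(t) ≤ C^M for all t ≥ 0, and A^L + σ > 0. Then every nonnegative continuous solution v : [−h, ∞) → ℝ of v′(t) = A(t) v(t−h) + σ v(t) − C(t) v(t)² (t > 0) with continuous initial function φ ≥ 0 on [−h, 0] and φ(0) > 0 satisfies liminf_{t→∞} v(t) ≥ (A^L + σ)/C^M and limsup_{t→∞} v(t) ≤ (A^M + σ)/C^L. -/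
open Filter Set Topology

lemma eventually_gt_right {v : ℝ → ℝ} {d t : ℝ} (hd : HasDerivAt v d t) (h0 : 0 < d) :
    ∀ᶠ u in 𝓝[>] t, v t < v u := by
  have hs := hasDerivAt_iff_tendsto_slope.1 hd
  have hs' : Tendsto (slope v t) (𝓝[>] t) (𝓝 d) :=
    hs.mono_left (nhdsWithin_mono t fun u hu => ne_of_gt hu)
  filter_upwards [hs'.eventually_const_lt h0, self_mem_nhdsWithin] with u hu hut
  have h1 : 0 < u - t := sub_pos.2 hut
  have := mul_pos hu h1
  rw [slope_def_field] at this
  have : 0 < v u - v t := by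
    field_simp at this
    linarith [this]
  linarith

lemma no_downcross {v : ℝ → ℝ} {m a T : ℝ} (hc : ContinuousOn v (Ici a)) (haT : a ≤ T)
    (hinit : ∀ s ∈ Icc a T, m ≤ v s)
    (hd : ∀ t, T ≤ t → v t = m → (∀ s ∈ Icc a t, m ≤ v s) →
      ∃ d, 0 < d ∧ HasDerivAt v d t) :
    ∀ t, a ≤ t → m ≤ v t := by
  by_contra hcon
  push_neg at hcon
  obtain ⟨t, hat, hvt⟩ := hcon
  set S : Set ℝ := {t | T ≤ t ∧ v t < m} with hS
  have hSne : S.Nonempty := by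
    refine ⟨t, ?_, hvt⟩
    by_contra hTt
    push_neg at hTt
    exact absurd (hinit t ⟨hat, hTt.le⟩) (not_le.2 hvt)
  have hSbdd : BddBelow S := ⟨T, fun s hs => hs.1⟩
  set t1 := sInf S with ht1
  have hTt1 : T ≤ t1 := le_csInf hSne fun s hs => hs.1
  have hat1 : a ≤ t1 := haT.trans hTt1
  have hScl : t1 ∈ closure S := csInf_mem_closure hSne hSbdd
  have hSsub : S ⊆ Ici a := fun s hs => haT.trans hs.1
  -- v t1 ≤ m
  have hle : v t1 ≤ m := by
    have hcw : ContinuousWithinAt v S t1 := ((hc t1 hat1).mono hSsub)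
    have h1 : v t1 ∈ closure (v '' S) := hcw.mem_closure_image hScl
    have h2 : v '' S ⊆ Iio m := by rintro _ ⟨s, hs, rfl⟩; exact hs.2
    have := closure_mono h2 h1
    rwa [closure_Iio] at this
  -- everything left of t1 is ≥ m
  have hwin : ∀ s ∈ Ico a t1, m ≤ v s := by
    rintro s ⟨has, hst⟩
    by_cases hsT : s ≤ T
    · exact hinit s ⟨has, hsT⟩
    · by_contra hvs
      push_neg at hvs
      exact absurd (csInf_le hSbdd ⟨(not_le.1 hsT).le, hvs⟩) (not_le.2 hst)
  have hge : m ≤ v t1 := by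
    rcases eq_or_lt_of_le hTt1 with heq | hlt
    · exact heq ▸ hinit T ⟨haT, le_rfl⟩
    · have halt : a < t1 := lt_of_le_of_lt haT hlt
      have hcw : ContinuousWithinAt v (Ico a t1) t1 :=
        (hc t1 hat1).mono Ico_subset_Ici_self
      have hcl : t1 ∈ closure (Ico a t1) := by
        rw [closure_Ico (ne_of_lt halt)]; exact ⟨hat1, le_rfl⟩
      have h1 : v t1 ∈ closure (v '' Ico a t1) := hcw.mem_closure_image hcl
      have h2 : v '' Ico a t1 ⊆ Ici m := by rintro _ ⟨s, hs, rfl⟩; exact hwin s hs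
      have := closure_mono h2 h1
      rwa [closure_Ici] at this
  have hvt1 : v t1 = m := le_antisymm hle hge
  have hwin' : ∀ s ∈ Icc a t1, m ≤ v s := by
    rintro s ⟨has, hst⟩
    rcases eq_or_lt_of_le hst with rfl | hlt
    · exact hge
    · exact hwin s ⟨has, hlt⟩
  obtain ⟨d, hdpos, hder⟩ := hd t1 hTt1 hvt1 hwin'
  have hev : ∀ᶠ u in 𝓝[>] t1, v t1 < v u := eventually_gt_right hder hdpos
  -- but S accumulates at t1 from the right
  have hne : (𝓝[S] t1).NeBot := mem_closure_iff_nhdsWithin_neBot.1 hScl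
  have hSIoi : S ⊆ Ioi t1 := by
    intro s hs
    rcases lt_or_ge t1 s with hl | hl
    · exact hl
    · exfalso
      have : t1 ≤ s := csInf_le hSbdd hs
      have : s = t1 := le_antisymm hl this
      rw [this] at hs
      exact absurd hs.2 (not_lt.2 hge)
  have hev' : ∀ᶠ u in 𝓝[S] t1, v t1 < v u :=
    hev.filter_mono (nhdsWithin_mono t1 hSIoi)
  obtain ⟨u, huS, hu⟩ := (hev'.and self_mem_nhdsWithin).exists
  rw [hvt1] at huS
  exact absurd huS (not_lt.2 hu.2.le)

lemma le_of_deriv_ge {v w : ℝ → ℝ} {a c : ℝ} (hc : ContinuousOn v (Ici a))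
    (hd : ∀ t, a < t → HasDerivAt v (w t) t) (hw : ∀ t, a < t → c ≤ w t) :
    ∀ t, a ≤ t → v a + c * (t - a) ≤ v t := by
  have hg : MonotoneOn (fun t => v t - c * t) (Ici a) := by
    apply monotoneOn_of_deriv_nonneg (convex_Ici a)
    · exact hc.sub ((continuous_const.mul continuous_id).continuousOn)
    · intro x hx
      rw [interior_Ici] at hx
      exact (((hd x hx).sub ((hasDerivAt_id x).const_mul c)).differentiableAt).differentiableWithinAt
    · intro x hx
      rw [interior_Ici] at hx
      have hder : HasDerivAt (fun t => v t - c * t) (w x - c * 1) x :=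
        (hd x hx).sub ((hasDerivAt_id x).const_mul c)
      rw [hder.deriv]
      have := hw x hx
      linarith
  intro t hat
  have := hg (self_mem_Ici) hat hat
  simp only at this
  nlinarith [this]

lemma pos_of_deriv_ge_neg_mul {v w : ℝ → ℝ} {K : ℝ} (hc : ContinuousOn v (Ici 0))
    (hd : ∀ t, 0 < t → HasDerivAt v (w t) t) (hw : ∀ t, 0 < t → -(K * v t) ≤ w t)
    (h0 : 0 < v 0) : ∀ t, 0 ≤ t → 0 < v t := by
  have hg : MonotoneOn (fun t => v t * Real.exp (K * t)) (Ici 0) := by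
    apply monotoneOn_of_deriv_nonneg (convex_Ici 0)
    · exact hc.mul (Real.continuous_exp.comp (continuous_const.mul continuous_id)).continuousOn
    · intro x hx
      rw [interior_Ici] at hx
      exact (((hd x hx).mul (((hasDerivAt_id x).const_mul K).exp)).differentiableAt).differentiableWithinAt
    · intro x hx
      rw [interior_Ici] at hx
      have hder : HasDerivAt (fun t => v t * Real.exp (K * t))
          (w x * Real.exp (K * x) + v x * (Real.exp (K * x) * (K * 1))) x :=
        (hd x hx).mul (((hasDerivAt_id x).const_mul K).exp)
      rw [hder.deriv]
      have h1 := hw x hx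
      have h2 := Real.exp_pos (K * x)
      nlinarith
  intro t ht
  have := hg (self_mem_Ici) ht ht
  simp only [mul_zero, Real.exp_zero, mul_one] at this
  have h2 := Real.exp_pos (K * t)
  nlinarith

set_option maxHeartbeats 2000000 in
/-- **The permanence bounds (26).** If `0 < A^L ≤ A(t) ≤ A^M`, `0 < C^L ≤ C(t) ≤ C^M` and
`A^L + σ > 0`, then every nonnegative continuous solution of
`v' = A(t) v(·-h) + σ v - C(t) v²` with `φ ≥ 0`, `φ(0) > 0` satisfies
`liminf v ≥ (A^L + σ)/C^M` and `limsup v ≤ (A^M + σ)/C^L`. -/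
theorem delay_logistic_permanence (h σ AL AM CL CM : ℝ) (hh : 0 < h)
    (A C : ℝ → ℝ) (hApc : PiecewiseContinuousFn A) (hCpc : PiecewiseContinuousFn C)
    (hAL : 0 < AL) (hCL : 0 < CL) (hALσ : 0 < AL + σ)
    (hA : ∀ s : ℝ, 0 ≤ s → AL ≤ A s ∧ A s ≤ AM)
    (hC : ∀ s : ℝ, 0 ≤ s → CL ≤ C s ∧ C s ≤ CM)
    (v : ℝ → ℝ) (hvc : ContinuousOn v (Set.Ici (-h)))
    (hvnn : ∀ s : ℝ, -h ≤ s → 0 ≤ v s) (hv0 : 0 < v 0)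
    (hv : ∀ s : ℝ, 0 < s →
      HasDerivAt v (A s * v (s - h) + σ * v s - C s * v s ^ 2) s) :
    (AL + σ) / CM ≤ Filter.liminf v Filter.atTop ∧
      Filter.limsup v Filter.atTop ≤ (AM + σ) / CL := by
  obtain ⟨w, hw_def⟩ : ∃ w : ℝ → ℝ, ∀ s, w s = A s * v (s - h) + σ * v s - C s * v s ^ 2 :=
    ⟨_, fun s => rfl⟩
  have hAM : 0 < AM := lt_of_lt_of_le hAL ((hA 0 le_rfl).1.trans (hA 0 le_rfl).2)
  have hCM : 0 < CM := lt_of_lt_of_le hCL ((hC 0 le_rfl).1.trans (hC 0 le_rfl).2)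
  have hALAM : AL ≤ AM := (hA 0 le_rfl).1.trans (hA 0 le_rfl).2
  have hCLCM : CL ≤ CM := (hC 0 le_rfl).1.trans (hC 0 le_rfl).2
  have hAMσ : 0 < AM + σ := by linarith
  -- maximum on [-h, h]
  have hsub1 : Icc (-h) h ⊆ Ici (-h) := Icc_subset_Ici_self
  obtain ⟨x0, hx0mem, hx0⟩ := isCompact_Icc.exists_isMaxOn ⟨-h, le_refl (-h), by linarith⟩
      (hvc.mono hsub1)
  obtain ⟨B, hBpos, hBK, hBinit⟩ :
      ∃ B : ℝ, 0 < B ∧ AM + σ < CL * B ∧ ∀ s ∈ Icc (-h) h, v s ≤ B := by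
    refine ⟨max (v x0) ((AM + σ) / CL) + 1, ?_, ?_, ?_⟩
    · have h1 : 0 < (AM + σ) / CL := div_pos hAMσ hCL
      have h2 := le_max_right (v x0) ((AM + σ) / CL)
      linarith
    · have h1 := le_max_right (v x0) ((AM + σ) / CL)
      have h2 : (AM + σ) / CL * CL = AM + σ := div_mul_cancel₀ _ (ne_of_gt hCL)
      have h3 := mul_le_mul_of_nonneg_left h1 hCL.le
      linarith
    · intro s hs
      have h1 : v s ≤ v x0 := hx0 hs
      have h2 := le_max_left (v x0) ((AM + σ) / CL)
      linarith
  -- Step 1: global upper bound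
  have hB : ∀ t, -h ≤ t → v t ≤ B := by
    have key := no_downcross (v := fun t => -v t) (m := -B) (a := -h) (T := h)
      (hvc.neg) (by linarith)
      (by
        intro s hs
        simp only [neg_le_neg_iff]
        exact hBinit s hs)
      (by
        intro t ht hvt hwin
        have ht0 : 0 < t := lt_of_lt_of_le hh ht
        have hvtB : v t = B := by linarith [neg_inj.1 hvt]
        refine ⟨-(w t), ?_, by rw [hw_def]; exact (hv t ht0).neg⟩
        have hth : (0:ℝ) ≤ t - h := by linarith
        have h1 : v (t - h) ≤ B := by
          have := hwin (t - h) ⟨by linarith, by linarith⟩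
          simpa using this
        have h2 : 0 ≤ v (t - h) := hvnn _ (by linarith)
        have hAt := hA t (by linarith)
        have hCt := hC t (by linarith)
        have h3 : A t * v (t - h) ≤ AM * B :=
          mul_le_mul hAt.2 h1 h2 hAM.le
        have h4 : CL * B ^ 2 ≤ C t * B ^ 2 :=
          mul_le_mul_of_nonneg_right hCt.1 (sq_nonneg B)
        rw [neg_pos, hw_def, hvtB]
        have h5 := mul_lt_mul_of_pos_right hBK hBpos
        linarith
      )
    intro t ht
    have h9 : -B ≤ -v t := key t ht
    linarith
  -- Step 2: positivity
  have hIci0 : Ici (0:ℝ) ⊆ Ici (-h) := Ici_subset_Ici.2 (by linarith)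
  have hpos : ∀ t, 0 ≤ t → 0 < v t := by
    refine pos_of_deriv_ge_neg_mul (K := |σ| + CM * B) (w := w) (hvc.mono hIci0)
      (fun t ht => by rw [hw_def]; exact hv t ht) ?_ hv0
    intro t ht
    have hvt0 : 0 ≤ v t := hvnn t (by linarith)
    have hvtB : v t ≤ B := hB t (by linarith)
    have hAt := hA t ht.le
    have hCt := hC t ht.le
    have h1 : 0 ≤ A t * v (t - h) := mul_nonneg (by linarith) (hvnn _ (by linarith))
    have h2 : -|σ| ≤ σ := neg_abs_le σ
    have h3 : C t * v t ^ 2 ≤ CM * B * v t := by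
      have a1 : C t * v t ^ 2 ≤ CM * v t ^ 2 := mul_le_mul_of_nonneg_right hCt.2 (sq_nonneg _)
      have a2 : v t * v t ≤ B * v t := mul_le_mul_of_nonneg_right hvtB hvt0
      have a3 := mul_le_mul_of_nonneg_left a2 hCM.le
      nlinarith
    have h5 : -|σ| * v t ≤ σ * v t := mul_le_mul_of_nonneg_right h2 hvt0
    rw [hw_def]
    linarith
  -- Step 3: lower barrier
  obtain ⟨x1, hx1mem, hx1⟩ := isCompact_Icc.exists_isMinOn ⟨0, le_refl (0:ℝ), hh.le⟩
      ((hvc.mono hIci0).mono Icc_subset_Ici_self)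
  obtain ⟨m, hm0, hmK, hminit⟩ :
      ∃ m : ℝ, 0 < m ∧ CM * m ≤ (AL + σ) / 2 ∧ ∀ s ∈ Icc 0 h, m ≤ v s := by
    refine ⟨min (v x1) ((AL + σ) / (2 * CM)), ?_, ?_, ?_⟩
    · exact lt_min (hpos x1 hx1mem.1) (by positivity)
    · have h1 : min (v x1) ((AL + σ) / (2 * CM)) ≤ (AL + σ) / (2 * CM) := min_le_right _ _
      have h2 : CM * ((AL + σ) / (2 * CM)) = (AL + σ) / 2 := by
        field_simp
      have h3 := mul_le_mul_of_nonneg_left h1 hCM.le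
      linarith
    · intro s hs
      exact (min_le_left _ _).trans (hx1 hs)
  have hlow : ∀ t, 0 ≤ t → m ≤ v t := by
    refine no_downcross (a := 0) (T := h) (hvc.mono hIci0) hh.le hminit ?_
    intro t ht hvt hwin
    have ht0 : 0 < t := lt_of_lt_of_le hh ht
    refine ⟨w t, ?_, by rw [hw_def]; exact hv t ht0⟩
    have hAt := hA t ht0.le
    have hCt := hC t ht0.le
    have h1 : m ≤ v (t - h) := hwin (t - h) ⟨by linarith, by linarith⟩
    have h2 : AL * m ≤ A t * v (t - h) := by
      have ha := mul_le_mul_of_nonneg_left h1 hAL.le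
      have h0 : 0 ≤ v (t - h) := hvnn _ (by linarith)
      have hb := mul_le_mul_of_nonneg_right hAt.1 h0
      linarith
    have h4 : C t * m ^ 2 ≤ CM * m ^ 2 :=
      mul_le_mul_of_nonneg_right hCt.2 (sq_nonneg m)
    have h6 := mul_le_mul_of_nonneg_right hmK hm0.le
    have h8 : 0 < (AL + σ) / 2 * m := mul_pos (by linarith) hm0
    rw [hw_def, hvt]
    linarith
  -- Step 4: liminf/limsup facts
  set l : ℝ := liminf v atTop with hl_def
  set L : ℝ := limsup v atTop with hL_def
  clear_value l L
  have hevB : ∀ᶠ t in atTop, v t ≤ B := eventually_atTop.2 ⟨0, fun t ht => hB t (by linarith)⟩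
  have hevm : ∀ᶠ t in atTop, m ≤ v t := eventually_atTop.2 ⟨0, fun t ht => hlow t ht⟩
  have hbddle : IsBoundedUnder (· ≤ ·) atTop v := ⟨B, hevB⟩
  have hbddge : IsBoundedUnder (· ≥ ·) atTop v := ⟨m, hevm⟩
  have hlm : m ≤ l := by
    rw [hl_def]; exact le_liminf_of_le hbddle.isCoboundedUnder_ge hevm
  have hLB : L ≤ B := by
    rw [hL_def]; exact limsup_le_of_le hbddge.isCoboundedUnder_le hevB
  have hlL : l ≤ L := by
    rw [hl_def, hL_def]; exact liminf_le_limsup hbddle hbddge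
  have hlpos : 0 < l := lt_of_lt_of_le hm0 hlm
  constructor
  · -- liminf bound
    by_contra hcon
    push_neg at hcon
    have hlK : CM * l < AL + σ := by
      have := (lt_div_iff₀ hCM).1 hcon
      linarith
    set c : ℝ := l * (AL + σ - CM * l) with hc_def
    clear_value c
    have hcpos : 0 < c := by
      rw [hc_def]; exact mul_pos hlpos (by linarith)
    obtain ⟨q, hq_def⟩ : ∃ q : ℝ → ℝ, ∀ y, q y = AL * l + σ * y - CM * y ^ 2 :=
      ⟨_, fun y => rfl⟩
    have hql : q l = c := by rw [hq_def, hc_def]; ring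
    have hqcont : ContinuousAt q l := by
      have : (q : ℝ → ℝ) = fun y => AL * l + σ * y - CM * y ^ 2 := funext hq_def
      rw [this]; fun_prop
    obtain ⟨δ, hδpos, hδ⟩ := Metric.continuousAt_iff.1 hqcont (c / 4) (by positivity)
    set θ : ℝ := δ / 2 with hθ_def
    clear_value θ
    have hθpos : 0 < θ := by rw [hθ_def]; positivity
    set ε : ℝ := min θ (c / (4 * AL)) with hε_def
    clear_value ε
    have hεpos : 0 < ε := by rw [hε_def]; exact lt_min hθpos (by positivity)
    have hεθ : ε ≤ θ := by rw [hε_def]; exact min_le_left _ _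
    have hεc : AL * ε ≤ c / 4 := by
      have h1 : ε ≤ c / (4 * AL) := by rw [hε_def]; exact min_le_right _ _
      have h2 : AL * (c / (4 * AL)) = c / 4 := by field_simp
      have h3 := mul_le_mul_of_nonneg_left h1 hAL.le
      linarith
    have hqbound : ∀ y, l - ε ≤ y → y ≤ l + θ → c / 2 + AL * ε ≤ q y := by
      intro y hy1 hy2
      have hdist : dist y l < δ := by
        rw [Real.dist_eq, abs_lt]
        constructor <;> [linarith [hεθ, hθpos]; linarith]
      have := hδ hdist
      rw [Real.dist_eq, hql, abs_lt] at this
      linarith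
    -- eventual lower bound
    have hev : ∀ᶠ t in atTop, l - ε < v t :=
      eventually_lt_of_lt_liminf (by simp only [← hl_def]; linarith) hbddge
    obtain ⟨T0, hT0⟩ := eventually_atTop.1 hev
    set T1 : ℝ := max T0 0 with hT1_def
    have hT1nn : (0:ℝ) ≤ T1 := le_max_right _ _
    have hkey : ∀ t, T1 + h ≤ t → l - ε ≤ v t → v t ≤ l + θ → c / 2 ≤ w t := by
      intro t ht h1 h2
      have ht0 : 0 < t := by linarith
      have hAt := hA t ht0.le
      have hCt := hC t ht0.le
      have hvth : l - ε ≤ v (t - h) := (hT0 (t - h) (by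
        simp only [hT1_def] at ht
        have := le_max_left T0 0
        linarith)).le
      have h3 : AL * (l - ε) ≤ A t * v (t - h) := by
        have ha : AL * (l - ε) ≤ AL * v (t - h) := mul_le_mul_of_nonneg_left hvth hAL.le
        have hb : AL * v (t - h) ≤ A t * v (t - h) :=
          mul_le_mul_of_nonneg_right hAt.1 (hvnn _ (by linarith))
        linarith
      have h4 : C t * v t ^ 2 ≤ CM * v t ^ 2 := mul_le_mul_of_nonneg_right hCt.2 (sq_nonneg _)
      have h5 := hqbound (v t) h1 h2
      rw [hq_def] at h5
      rw [hw_def]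
      linarith
    by_cases hcase : ∃ t0, T1 + h ≤ t0 ∧ l + θ ≤ v t0
    · obtain ⟨t0, ht0ge, ht0v⟩ := hcase
      have ht0nn : (0:ℝ) ≤ t0 := by linarith
      have hstay : ∀ t, t0 ≤ t → l + θ ≤ v t := by
        refine no_downcross (a := t0) (T := t0)
          (hvc.mono (Ici_subset_Ici.2 (by linarith))) le_rfl
          (by intro s hs; rw [show s = t0 by exact le_antisymm hs.2 hs.1]; exact ht0v) ?_
        intro t ht hvt hwin
        have ht0' : 0 < t := by linarith
        refine ⟨w t, ?_, by rw [hw_def]; exact hv t ht0'⟩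
        have := hkey t (by linarith) (by rw [hvt]; linarith) (le_of_eq hvt)
        linarith
      have h9 : l + θ ≤ liminf v atTop :=
        le_liminf_of_le hbddle.isCoboundedUnder_ge
          (eventually_atTop.2 ⟨t0, fun t ht => hstay t ht⟩)
      rw [← hl_def] at h9
      linarith
    · push_neg at hcase
      have hgrow := le_of_deriv_ge (a := T1 + h) (c := c / 2) (w := w)
        (hvc.mono (Ici_subset_Ici.2 (by linarith)))
        (fun t ht => by rw [hw_def]; exact hv t (by linarith))
        (by
          intro t ht
          have hTt : T0 ≤ t := by
            simp only [hT1_def] at ht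
            have := le_max_left T0 0
            linarith
          exact hkey t ht.le (hT0 t hTt).le (hcase t ht.le).le)
      set tstar : ℝ := T1 + h + 2 * (B + 1 - v (T1 + h)) / c with htstar_def
      have hvT1h : v (T1 + h) ≤ B := hB _ (by linarith)
      have htstarge : T1 + h ≤ tstar := by
        simp only [htstar_def]
        have : 0 ≤ 2 * (B + 1 - v (T1 + h)) / c := div_nonneg (by linarith) hcpos.le
        linarith
      have h1 := hgrow tstar htstarge
      have h2 : v tstar ≤ B := hB tstar (by linarith)
      have h3 : c / 2 * (tstar - (T1 + h)) = B + 1 - v (T1 + h) := by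
        simp only [htstar_def]
        field_simp
        ring
      linarith
  · -- limsup bound
    by_contra hcon
    push_neg at hcon
    have hLpos : 0 < L := lt_trans (div_pos hAMσ hCL) hcon
    have hLK : AM + σ < CL * L := by
      have := (div_lt_iff₀ hCL).1 hcon
      linarith
    set c : ℝ := L * (CL * L - (AM + σ)) with hc_def
    clear_value c
    have hcpos : 0 < c := by
      rw [hc_def]; exact mul_pos hLpos (by linarith)
    obtain ⟨q, hq_def⟩ : ∃ q : ℝ → ℝ, ∀ y, q y = AM * L + σ * y - CL * y ^ 2 :=
      ⟨_, fun y => rfl⟩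
    have hql : q L = -c := by rw [hq_def, hc_def]; ring
    have hqcont : ContinuousAt q L := by
      have : (q : ℝ → ℝ) = fun y => AM * L + σ * y - CL * y ^ 2 := funext hq_def
      rw [this]; fun_prop
    obtain ⟨δ, hδpos, hδ⟩ := Metric.continuousAt_iff.1 hqcont (c / 4) (by positivity)
    set θ : ℝ := δ / 2 with hθ_def
    clear_value θ
    have hθpos : 0 < θ := by rw [hθ_def]; positivity
    set ε : ℝ := min θ (c / (4 * AM)) with hε_def
    clear_value ε
    have hεpos : 0 < ε := by rw [hε_def]; exact lt_min hθpos (by positivity)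
    have hεθ : ε ≤ θ := by rw [hε_def]; exact min_le_left _ _
    have hεc : AM * ε ≤ c / 4 := by
      have h1 : ε ≤ c / (4 * AM) := by rw [hε_def]; exact min_le_right _ _
      have h2 : AM * (c / (4 * AM)) = c / 4 := by field_simp
      have h3 := mul_le_mul_of_nonneg_left h1 hAM.le
      linarith
    have hqbound : ∀ y, L - θ ≤ y → y ≤ L + ε → q y ≤ -c / 2 - AM * ε := by
      intro y hy1 hy2
      have hdist : dist y L < δ := by
        rw [Real.dist_eq, abs_lt]
        constructor <;> [linarith; linarith [hεθ, hθpos]]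
      have := hδ hdist
      rw [Real.dist_eq, hql, abs_lt] at this
      linarith
    have hev : ∀ᶠ t in atTop, v t < L + ε :=
      eventually_lt_of_limsup_lt (by simp only [← hL_def]; linarith) hbddle
    obtain ⟨T0, hT0⟩ := eventually_atTop.1 hev
    set T1 : ℝ := max T0 0 with hT1_def
    have hT1nn : (0:ℝ) ≤ T1 := le_max_right _ _
    have hLε : 0 ≤ L + ε := by linarith
    have hkey : ∀ t, T1 + h ≤ t → L - θ ≤ v t → v t ≤ L + ε → w t ≤ -c / 2 := by
      intro t ht h1 h2
      have ht0 : 0 < t := by linarith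
      have hAt := hA t ht0.le
      have hCt := hC t ht0.le
      have hvth : v (t - h) ≤ L + ε := (hT0 (t - h) (by
        simp only [hT1_def] at ht
        have := le_max_left T0 0
        linarith)).le
      have h3 : A t * v (t - h) ≤ AM * (L + ε) :=
        mul_le_mul hAt.2 hvth (hvnn _ (by linarith)) hAM.le
      have h4 : CL * v t ^ 2 ≤ C t * v t ^ 2 := mul_le_mul_of_nonneg_right hCt.1 (sq_nonneg _)
      have h5 := hqbound (v t) h1 h2
      rw [hq_def] at h5
      rw [hw_def]
      linarith
    by_cases hcase : ∃ t0, T1 + h ≤ t0 ∧ v t0 ≤ L - θ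
    · obtain ⟨t0, ht0ge, ht0v⟩ := hcase
      have hstay : ∀ t, t0 ≤ t → v t ≤ L - θ := by
        have key := no_downcross (v := fun t => -v t) (m := -(L - θ)) (a := t0) (T := t0)
          ((hvc.mono (Ici_subset_Ici.2 (by linarith))).neg) le_rfl
          (by intro s hs; rw [show s = t0 by exact le_antisymm hs.2 hs.1]; exact neg_le_neg ht0v)
          (by
            intro t ht hvt hwin
            have ht0' : 0 < t := by linarith
            have hvt' : v t = L - θ := by
              have := neg_inj.1 hvt; linarith
            refine ⟨-(w t), ?_, by rw [hw_def]; exact (hv t ht0').neg⟩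
            have := hkey t (by linarith) (le_of_eq hvt'.symm) (by rw [hvt']; linarith)
            linarith)
        intro t ht
        have h9 : -(L - θ) ≤ -v t := key t ht
        linarith
      have h9 : limsup v atTop ≤ L - θ :=
        limsup_le_of_le hbddge.isCoboundedUnder_le
          (eventually_atTop.2 ⟨t0, fun t ht => hstay t ht⟩)
      rw [← hL_def] at h9
      linarith
    · push_neg at hcase
      have hgrow := le_of_deriv_ge (v := fun t => -v t) (a := T1 + h) (c := c / 2)
        (w := fun t => -(w t))
        ((hvc.mono (Ici_subset_Ici.2 (by linarith))).neg)
        (fun t ht => by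
          show HasDerivAt (fun t => -v t) (-(w t)) t
          rw [hw_def]; exact (hv t (by linarith)).neg)
        (by
          intro t ht
          have := hkey t ht.le (hcase t ht.le).le
            (hT0 t (by
              simp only [hT1_def] at ht
              have := le_max_left T0 0
              linarith)).le
          linarith)
      set tstar : ℝ := T1 + h + 2 * (v (T1 + h) + 1) / c with htstar_def
      have hvT1h : 0 ≤ v (T1 + h) := hvnn _ (by linarith)
      have htstarge : T1 + h ≤ tstar := by
        simp only [htstar_def]
        have : 0 ≤ 2 * (v (T1 + h) + 1) / c := div_nonneg (by linarith) hcpos.le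
        linarith
      have h1 := hgrow tstar htstarge
      have h2 : 0 ≤ v tstar := hvnn tstar (by linarith)
      have h3 : c / 2 * (tstar - (T1 + h)) = v (T1 + h) + 1 := by
        simp only [htstar_def]
        field_simp
        ring
      linarith
end

section
/- Let h > 0 and let A, B : [0, ∞) → ℝ be piecewise continuous functions with 0 ≤ A(t) for all t, sup_{t≥0} A(t) < inf_{t≥0} B(t), and B bounded above. Then every continuous solution w : [−h, ∞) → ℝ of the linear delay equation w′(t) = A(t) w(t−h) − B(t) w(t) (t > 0) with bounded continuous initial function on [−h, 0] satisfies w(t) → 0 as t → ∞. -/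
open Filter Set Topology

/-- Fencing lemma for `|w|` along a barrier `φ` on `[σ, τ]` with `σ > 0`. -/
lemma delay_fence {h a b : ℝ} (hh : 0 < h) {A B w : ℝ → ℝ}
    (hAnn : ∀ s : ℝ, 0 ≤ s → 0 ≤ A s) (hAa : ∀ s : ℝ, 0 ≤ s → A s ≤ a)
    (hbB : ∀ s : ℝ, 0 ≤ s → b ≤ B s)
    (hwc : ContinuousOn w (Set.Ici (-h)))
    (hw : ∀ s : ℝ, 0 < s → HasDerivAt w (A s * w (s - h) - B s * w s) s)
    {σ τ Mdel : ℝ} (hσ : 0 < σ) (hMdel : 0 ≤ Mdel)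
    (hdel : ∀ x ∈ Set.Ico σ τ, |w (x - h)| ≤ Mdel)
    {φ φ' : ℝ → ℝ} (hφc : ContinuousOn φ (Set.Icc σ τ))
    (hφd : ∀ x ∈ Set.Ico σ τ, HasDerivWithinAt φ (φ' x) (Set.Ici x) x)
    (hφpos : ∀ x ∈ Set.Ico σ τ, 0 < φ x)
    (hcomp : ∀ x ∈ Set.Ico σ τ, a * Mdel - b * φ x < φ' x)
    (hstart : |w σ| ≤ φ σ) : ∀ t ∈ Set.Icc σ τ, |w t| ≤ φ t := by
  intro t ht
  have habs : ContinuousOn (fun t => |w t|) (Set.Icc σ τ) := by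
    apply ContinuousOn.abs
    exact hwc.mono fun x hx => le_trans (by linarith) hx.1
  refine image_le_of_liminf_slope_right_lt_deriv_boundary'
    (f := fun t => |w t|)
    (f' := fun x => if 0 < w x then A x * w (x - h) - B x * w x
      else if w x < 0 then -(A x * w (x - h) - B x * w x)
      else |A x * w (x - h) - B x * w x|)
    habs ?_ hstart hφc hφd ?_ ht
  · -- slope condition
    intro x hx r hr
    have hx0 : 0 < x := lt_of_lt_of_le hσ hx.1
    have hdw : HasDerivAt w (A x * w (x - h) - B x * w x) x := hw x hx0
    have hsl : Tendsto (slope w x) (𝓝[>] x) (𝓝 (A x * w (x - h) - B x * w x)) :=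
      (hasDerivAt_iff_tendsto_slope.mp hdw).mono_left
        (nhdsWithin_mono x fun z hz => Set.mem_compl_singleton_iff.mpr (ne_of_gt hz))
    split_ifs at hr with h1 h2
    · -- 0 < w x
      have hev : ∀ᶠ z in 𝓝[>] x, 0 < w z :=
        (hdw.continuousAt.eventually_const_lt h1).filter_mono nhdsWithin_le_nhds
      have heq : ∀ᶠ z in 𝓝[>] x,
          slope w x z = slope (fun t => |w t|) x z := by
        filter_upwards [hev] with z hz
        rw [slope_def_field, slope_def_field, abs_of_pos hz, abs_of_pos h1]
      exact ((hsl.congr' heq).eventually_lt_const hr).frequently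
    · -- w x < 0
      have hev : ∀ᶠ z in 𝓝[>] x, w z < 0 :=
        (hdw.continuousAt.eventually_lt_const h2).filter_mono nhdsWithin_le_nhds
      have heq : ∀ᶠ z in 𝓝[>] x,
          (fun z => -slope w x z) z = slope (fun t => |w t|) x z := by
        filter_upwards [hev] with z hz
        simp only [slope_def_field, abs_of_neg hz, abs_of_neg h2]
        ring
      exact ((hsl.neg.congr' heq).eventually_lt_const hr).frequently
    · -- w x = 0
      have hwx0 : w x = 0 := le_antisymm (not_lt.mp h1) (not_lt.mp h2)
      have heq : ∀ᶠ z in 𝓝[>] x,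
          (fun z => |slope w x z|) z = slope (fun t => |w t|) x z := by
        filter_upwards [self_mem_nhdsWithin] with z hz
        simp only [slope_def_field, hwx0, abs_zero, sub_zero, abs_div,
          abs_of_pos (sub_pos.mpr (Set.mem_Ioi.mp hz))]
      exact ((hsl.abs.congr' heq).eventually_lt_const hr).frequently
  · -- bound at contact points
    intro x hx hcontact
    have hx0 : 0 < x := lt_of_lt_of_le hσ hx.1
    have hx0' : (0:ℝ) ≤ x := hx0.le
    have hφx : 0 < φ x := hφpos x hx
    have hwx : w x ≠ 0 := by
      intro h0
      rw [h0, abs_zero] at hcontact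
      linarith
    have hdelx := hdel x hx
    have hAx0 := hAnn x hx0'
    have hAxa := hAa x hx0'
    have hBxb := hbB x hx0'
    have habsle := abs_le.mp hdelx
    have hcx := hcomp x hx
    rcases hwx.lt_or_gt with hneg | hpos
    · rw [if_neg (not_lt.mpr hneg.le), if_pos hneg]
      have hwxφ : w x = -φ x := by rw [← hcontact, abs_of_neg hneg]; ring
      have h2' : A x * (-(w (x - h))) ≤ A x * Mdel :=
        mul_le_mul_of_nonneg_left (by linarith [habsle.1]) hAx0
      have h3' : A x * Mdel ≤ a * Mdel := mul_le_mul_of_nonneg_right hAxa hMdel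
      have h4' : B x * w x ≤ b * w x := by nlinarith
      rw [mul_neg] at h2'
      have h5' : b * w x = -(b * φ x) := by rw [hwxφ]; ring
      linarith
    · rw [if_pos hpos]
      have hwxφ : w x = φ x := by rw [← hcontact, abs_of_pos hpos]
      have h2' : A x * w (x - h) ≤ A x * Mdel :=
        mul_le_mul_of_nonneg_left habsle.2 hAx0
      have h3' : A x * Mdel ≤ a * Mdel := mul_le_mul_of_nonneg_right hAxa hMdel
      have h4' : b * w x ≤ B x * w x := mul_le_mul_of_nonneg_right hBxb hpos.le
      have h5' : b * w x = b * φ x := by rw [hwxφ]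
      linarith

/-- **Stability criterion for the linear delay equation (27).** If `A(t) ≥ 0`,
`sup_{t ≥ 0} A(t) < inf_{t ≥ 0} B(t)` (witnessed by `a < b`) and `B` is bounded above,
then every continuous solution of `w' = A(t) w(·-h) - B(t) w` with bounded continuous
initial function on `[-h, 0]` tends to `0` at `+∞`. -/
theorem linear_delay_stability (h : ℝ) (hh : 0 < h)
    (A B : ℝ → ℝ) (hApc : PiecewiseContinuousFn A) (hBpc : PiecewiseContinuousFn B)
    (hAnn : ∀ s : ℝ, 0 ≤ s → 0 ≤ A s)
    (hgap : ∃ a b : ℝ, a < b ∧ (∀ s : ℝ, 0 ≤ s → A s ≤ a) ∧ (∀ s : ℝ, 0 ≤ s → b ≤ B s))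
    (hBbd : ∃ Bu : ℝ, ∀ s : ℝ, 0 ≤ s → B s ≤ Bu)
    (w : ℝ → ℝ) (hwc : ContinuousOn w (Set.Ici (-h)))
    (hw : ∀ s : ℝ, 0 < s → HasDerivAt w (A s * w (s - h) - B s * w s) s) :
    Tendsto w atTop (nhds 0) := by
  obtain ⟨a, b, hab, hAa, hbB⟩ := hgap
  have ha0 : 0 ≤ a := le_trans (hAnn 0 le_rfl) (hAa 0 le_rfl)
  have hb0 : 0 < b := lt_of_le_of_lt ha0 hab
  -- Lemma A : invariance of the ball of radius M
  have lemA : ∀ t0 M : ℝ, 0 ≤ t0 → 0 ≤ M →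
      (∀ s ∈ Set.Icc (t0 - h) t0, |w s| ≤ M) → ∀ t, t0 ≤ t → |w t| ≤ M := by
    intro t0 M ht0 hM hinit t ht
    have key : ∀ n : ℕ, ∀ ε : ℝ, 0 < ε → ∀ u ∈ Set.Icc t0 (t0 + (n : ℝ) * h),
        |w u| ≤ M + ε := by
      intro n
      induction n with
      | zero =>
        intro ε hε u hu
        push_cast at hu
        have hu' : u = t0 := le_antisymm (by linarith [hu.2]) hu.1
        have := hinit t0 ⟨by linarith, le_rfl⟩
        rw [hu']; linarith
      | succ n ih =>
        intro ε hε u hu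
        by_cases hcase : u ≤ t0 + (n : ℝ) * h
        · exact ih ε hε u ⟨hu.1, hcase⟩
        push_neg at hcase
        have hnn : (0:ℝ) ≤ (n:ℝ) * h := by positivity
        have hσ0nn : 0 ≤ t0 + (n:ℝ) * h := by linarith
        have hw0 : |w (t0 + (n:ℝ) * h)| ≤ M + ε / 2 :=
          ih (ε/2) (by linarith) (t0 + (n:ℝ)*h) ⟨by linarith, le_rfl⟩
        -- pick a starting point σ slightly to the right of t0 + n h
        have hcw : Tendsto w (𝓝[>] (t0 + (n:ℝ)*h)) (𝓝 (w (t0 + (n:ℝ)*h))) := by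
          have h1 : ContinuousWithinAt w (Set.Ici (-h)) (t0 + (n:ℝ)*h) :=
            hwc _ (by simp only [Set.mem_Ici]; linarith)
          refine h1.mono_left (nhdsWithin_mono _ fun z hz => ?_)
          have : t0 + (n:ℝ)*h < z := hz
          simp only [Set.mem_Ici]; linarith
        have hE1 : ∀ᶠ v in 𝓝[>] (t0 + (n:ℝ)*h), |w v| < M + ε :=
          hcw.abs.eventually_lt_const (by linarith)
        have hE2 : ∀ᶠ v in 𝓝[>] (t0 + (n:ℝ)*h), v < u :=
          (eventually_lt_nhds hcase).filter_mono nhdsWithin_le_nhds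
        have hE3 : ∀ᶠ v in 𝓝[>] (t0 + (n:ℝ)*h), t0 + (n:ℝ)*h < v :=
          eventually_mem_nhdsWithin
        obtain ⟨σ, hσ1, hσ2, hσ3⟩ := (hE1.and (hE2.and hE3)).exists
        -- apply the fence on [σ, t0 + (n+1) h]
        have hτu : u ≤ t0 + ((n:ℝ) + 1) * h := by
          have := hu.2; push_cast at this; linarith
        have hdelb : ∀ x ∈ Set.Ico σ (t0 + ((n:ℝ)+1)*h), |w (x - h)| ≤ M + ε := by
          intro x hx
          have hxl : σ ≤ x := hx.1
          have hxr : x < t0 + ((n:ℝ)+1)*h := hx.2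
          by_cases hxt : x - h ≤ t0
          · have := hinit (x - h) ⟨by linarith, hxt⟩; linarith
          · push_neg at hxt
            have := ih ε hε (x - h) ⟨hxt.le, by linarith⟩; linarith
        have hposb : ∀ x ∈ Set.Ico σ (t0 + ((n:ℝ)+1)*h),
            (0:ℝ) < (fun _ : ℝ => M + ε) x := fun x _ => by simp only; linarith
        have hcompb : ∀ x ∈ Set.Ico σ (t0 + ((n:ℝ)+1)*h),
            a * (M + ε) - b * (fun _ : ℝ => M + ε) x < (fun _ : ℝ => (0:ℝ)) x := by
          intro x _
          simp only
          nlinarith [mul_pos (sub_pos.mpr hab) (show (0:ℝ) < M + ε by linarith)]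
        have main := delay_fence hh hAnn hAa hbB hwc hw
          (lt_of_le_of_lt hσ0nn hσ3) (show (0:ℝ) ≤ M + ε by linarith) hdelb
          (continuousOn_const : ContinuousOn (fun _ : ℝ => M + ε) _)
          (fun x _ => (hasDerivAt_const x (M + ε)).hasDerivWithinAt)
          hposb hcompb hσ1.le
        exact main u ⟨hσ2.le, hτu⟩
    obtain ⟨n, hn⟩ := exists_nat_ge ((t - t0) / h)
    have htn : t ≤ t0 + (n : ℝ) * h := by
      rw [div_le_iff₀ hh] at hn; linarith
    by_contra hc
    push_neg at hc
    have := key n ((|w t| - M)/2) (by linarith) t ⟨ht, htn⟩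
    linarith
  -- Lemma B : exponential contraction estimate
  have lemB : ∀ t0 M : ℝ, 0 < t0 → 0 ≤ M →
      (∀ s ∈ Set.Icc (t0 - h) t0, |w s| ≤ M) →
      ∀ t, t0 ≤ t → |w t| ≤ a * M / b + M * Real.exp (-b * (t - t0)) := by
    intro t0 M ht0 hM hinit t ht
    have hglob : ∀ s, t0 - h ≤ s → |w s| ≤ M := by
      intro s hs
      by_cases h1 : s ≤ t0
      · exact hinit s ⟨hs, h1⟩
      · exact lemA t0 M ht0.le hM hinit s (le_of_not_ge h1)
    have key : ∀ ε : ℝ, 0 < ε →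
        |w t| ≤ a*M/b + M*Real.exp (-b*(t-t0)) + ε*(1/b+1) := by
      intro ε hε
      set c : ℝ := (a*M+ε)/b with hcdef
      have hbc : b * c = a*M + ε := by
        rw [hcdef]; field_simp
      have hcpos : 0 < c := div_pos (by nlinarith) hb0
      have hφd : ∀ s : ℝ, HasDerivAt (fun u => c + (M + ε - c) * Real.exp (-b*(u-t0)))
          ((M+ε-c) * (Real.exp (-b*(s-t0)) * (-b))) s := by
        intro s
        have h1 : HasDerivAt (fun u : ℝ => -b*(u-t0)) (-b) s := by
          simpa using ((hasDerivAt_id s).sub_const t0).const_mul (-b)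
        exact ((h1.exp).const_mul (M+ε-c)).const_add c
      have hdelb : ∀ x ∈ Set.Ico t0 t, |w (x - h)| ≤ M := by
        intro x hx
        exact hglob _ (by linarith [hx.1])
      have hposb : ∀ x ∈ Set.Ico t0 t,
          0 < (fun u => c + (M + ε - c) * Real.exp (-b*(u-t0))) x := by
        intro x hx
        simp only
        have hθ0 : 0 < Real.exp (-b*(x-t0)) := Real.exp_pos _
        have hθ1 : Real.exp (-b*(x-t0)) ≤ 1 := by
          rw [Real.exp_le_one_iff]
          nlinarith [mul_nonneg hb0.le (sub_nonneg.mpr hx.1)]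
        nlinarith [mul_nonneg hcpos.le (sub_nonneg.mpr hθ1),
          mul_pos (show (0:ℝ) < M + ε by linarith) hθ0]
      have hcompb : ∀ x ∈ Set.Ico t0 t,
          a * M - b * (fun u => c + (M + ε - c) * Real.exp (-b*(u-t0))) x <
            (M+ε-c) * (Real.exp (-b*(x-t0)) * (-b)) := by
        intro x _
        simp only
        have hexpand : a*M - b*(c + (M+ε-c)*Real.exp (-b*(x-t0)))
            - (M+ε-c) * (Real.exp (-b*(x-t0)) * (-b)) = a*M - b*c := by ring
        have h2 : a*M - b*c < 0 := by linarith
        linarith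
      have hstartb : |w t0| ≤ (fun u => c + (M + ε - c) * Real.exp (-b*(u-t0))) t0 := by
        have h1 : (fun u => c + (M + ε - c) * Real.exp (-b*(u-t0))) t0 = M + ε := by
          simp
        rw [h1]
        have := hinit t0 ⟨by linarith, le_rfl⟩
        linarith
      have main := delay_fence hh hAnn hAa hbB hwc hw ht0 hM hdelb
        (fun s _ => (hφd s).continuousAt.continuousWithinAt)
        (fun x _ => (hφd x).hasDerivWithinAt) hposb hcompb hstartb
      have hfin := main t ⟨ht, le_rfl⟩
      have hθ0 : 0 < Real.exp (-b*(t-t0)) := Real.exp_pos _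
      have hθ1 : Real.exp (-b*(t-t0)) ≤ 1 := by
        rw [Real.exp_le_one_iff]
        nlinarith [mul_nonneg hb0.le (sub_nonneg.mpr ht)]
      have hc2 : c = a*M/b + ε/b := by rw [hcdef]; ring
      have e1 : (M + ε - c) * Real.exp (-b*(t-t0)) = M*Real.exp (-b*(t-t0))
          + ε*Real.exp (-b*(t-t0)) - c*Real.exp (-b*(t-t0)) := by ring
      have e2 : 0 ≤ c * Real.exp (-b*(t-t0)) := mul_nonneg hcpos.le hθ0.le
      have e3 : ε * Real.exp (-b*(t-t0)) ≤ ε := by nlinarith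
      have e4 : ε * (1/b+1) = ε/b + ε := by ring
      linarith
    by_contra hcon
    push_neg at hcon
    have hk : (0:ℝ) < 1/b + 1 := by positivity
    have hd : 0 < |w t| - (a*M/b + M*Real.exp (-b*(t-t0))) := by linarith
    have := key ((|w t| - (a*M/b + M*Real.exp (-b*(t-t0))))/(2*(1/b+1)))
      (div_pos hd (by positivity))
    have heq : ((|w t| - (a*M/b + M*Real.exp (-b*(t-t0))))/(2*(1/b+1)))*(1/b+1)
        = (|w t| - (a*M/b + M*Real.exp (-b*(t-t0))))/2 := by
      field_simp
    linarith
  -- initial bound M0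
  obtain ⟨x0, hx0mem, hx0⟩ := isCompact_Icc.exists_isMaxOn
    (Set.nonempty_Icc.mpr (by linarith : -h ≤ (0:ℝ)))
    ((hwc.mono Set.Icc_subset_Ici_self).abs)
  have hM0 : (0:ℝ) ≤ |w x0| := abs_nonneg _
  have hinit0 : ∀ s ∈ Set.Icc ((0:ℝ) - h) 0, |w s| ≤ |w x0| := by
    intro s hs
    rw [zero_sub] at hs
    exact hx0 hs
  have hGlob : ∀ t : ℝ, -h ≤ t → |w t| ≤ |w x0| := by
    intro t ht
    by_cases h1 : t ≤ 0
    · exact hx0 ⟨ht, h1⟩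
    · exact lemA 0 (|w x0|) le_rfl hM0 hinit0 t (le_of_not_ge h1)
  -- geometric iteration
  have hr0 : 0 ≤ a/b := div_nonneg ha0 hb0.le
  have hr1 : a/b < 1 := (div_lt_one hb0).mpr hab
  set q : ℝ := (1 + a/b)/2 with hqdef
  have hq0 : 0 ≤ q := by rw [hqdef]; linarith
  have hq1 : q < 1 := by rw [hqdef]; linarith
  have hqr : 0 < q - a/b := by rw [hqdef]; linarith
  set s0 : ℝ := max 0 (-Real.log (q - a/b) / b) with hs0def
  have hs0 : 0 ≤ s0 := le_max_left _ _
  have hexp_s0 : Real.exp (-b * s0) ≤ q - a/b := by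
    have h1 : -Real.log (q - a/b) / b ≤ s0 := le_max_right _ _
    rw [div_le_iff₀ hb0] at h1
    have h3 : -b * s0 ≤ Real.log (q - a/b) := by nlinarith
    calc Real.exp (-b * s0) ≤ Real.exp (Real.log (q - a/b)) := Real.exp_le_exp.mpr h3
      _ = q - a/b := Real.exp_log hqr
  have claim : ∀ n : ℕ, ∀ t : ℝ, (n : ℝ) * (s0 + h) ≤ t → |w t| ≤ q^n * |w x0| := by
    intro n
    induction n with
    | zero =>
      intro t ht
      push_cast at ht
      simp only [pow_zero, one_mul]
      exact hGlob t (by linarith)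
    | succ n ih =>
      intro t ht
      push_cast at ht
      have hexp1 : ((n:ℝ) + 1) * (s0 + h) = (n:ℝ)*(s0+h) + s0 + h := by ring
      have hMn : 0 ≤ q^n * |w x0| := mul_nonneg (pow_nonneg hq0 n) (abs_nonneg _)
      have hncc : (0:ℝ) ≤ (n:ℝ) * (s0 + h) := by positivity
      have htt : (n:ℝ)*(s0+h) + h ≤ t := by linarith
      have hinitn : ∀ s ∈ Set.Icc ((n:ℝ)*(s0+h) + h - h) ((n:ℝ)*(s0+h) + h),
          |w s| ≤ q^n * |w x0| := by
        intro s hs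
        exact ih s (by linarith [hs.1])
      have happ := lemB ((n:ℝ)*(s0+h) + h) (q^n * |w x0|) (by linarith) hMn hinitn t htt
      have hts : s0 ≤ t - ((n:ℝ)*(s0+h) + h) := by linarith
      have hexp : Real.exp (-b*(t - ((n:ℝ)*(s0+h) + h))) ≤ q - a/b := by
        refine le_trans (Real.exp_le_exp.mpr ?_) hexp_s0
        nlinarith [mul_le_mul_of_nonneg_left hts hb0.le]
      have h1 : a*(q^n*|w x0|)/b = (a/b)*(q^n*|w x0|) := by ring
      have h2 : (q^n*|w x0|)*Real.exp (-b*(t - ((n:ℝ)*(s0+h) + h)))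
          ≤ (q^n*|w x0|)*(q - a/b) := mul_le_mul_of_nonneg_left hexp hMn
      calc |w t| ≤ a*(q^n*|w x0|)/b
            + (q^n*|w x0|)*Real.exp (-b*(t - ((n:ℝ)*(s0+h) + h))) := happ
        _ ≤ (a/b)*(q^n*|w x0|) + (q^n*|w x0|)*(q - a/b) := by linarith
        _ = q^(n+1) * |w x0| := by ring
  -- conclusion
  rw [Metric.tendsto_atTop]
  intro ε hε
  have htend : Tendsto (fun n : ℕ => q^n * |w x0|) atTop (𝓝 0) := by
    have := (tendsto_pow_atTop_nhds_zero_of_lt_one hq0 hq1).mul_const (|w x0|)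
    simpa using this
  obtain ⟨n, hn⟩ := (htend.eventually_lt_const hε).exists
  refine ⟨(n:ℝ) * (s0 + h), fun t ht => ?_⟩
  rw [Real.dist_eq, sub_zero]
  exact lt_of_le_of_lt (claim n t ht) hn
end

section
/- Let h > 0 and let α, γ, x_m : ℝ → ℝ be bounded piecewise continuous W-almost periodic functions with common discontinuity sequence {t_k} having uniformly almost periodic differences, with α and γ positive. Then the function x_i(t) = ∫_{t−h}^{t} α(s) x_m(s) e^{−∫_s^{t} γ(ξ)dξ} ds is continuous on ℝ and almost periodic in the sense of Bohr: for every ε > 0 there is a relatively dense set Γ ⊆ ℝ such that |x_i(t+τ) − x_i(t)| < ε for all τ ∈ Γ and all t ∈ ℝ. -/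
open Filter Set Topology

open MeasureTheory intervalIntegral

/-- A set of reals is relatively dense if every interval of some fixed length `L` meets it. -/
def RelDenseR (Γ : Set ℝ) : Prop :=
  ∃ L : ℝ, 0 < L ∧ ∀ a : ℝ, ∃ τ ∈ Γ, a ≤ τ ∧ τ ≤ a + L

/-- `φ` is W-almost periodic with discontinuity sequence `t`. -/
def WAP (t : ℤ → ℝ) (φ : ℝ → ℝ) : Prop :=
  UAPD t ∧ PCWith t φ ∧
  (∀ ε > (0 : ℝ), ∃ δ > (0 : ℝ), ∀ k : ℤ, ∀ t' ∈ Set.Ioc (t k) (t (k + 1)),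
    ∀ t'' ∈ Set.Ioc (t k) (t (k + 1)), |t' - t''| < δ → |φ t' - φ t''| < ε) ∧
  (∀ ε > (0 : ℝ), ∃ Γ : Set ℝ, RelDenseR Γ ∧
    ∀ τ ∈ Γ, ∀ s : ℝ, (∀ k : ℤ, ε ≤ |s - t k|) → |φ (s + τ) - φ s| < ε)

lemma exists_mem_Ioc' (t : ℤ → ℝ) (hmono : Monotone t)
    (htop : Tendsto t atTop atTop) (hbot : Tendsto t atBot atBot) (x : ℝ) :
    ∃ k : ℤ, t k < x ∧ x ≤ t (k + 1) := by
  have hne : ∃ k, t k < x := by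
    obtain ⟨k, hk⟩ := (hbot.eventually (eventually_le_atBot (x - 1))).exists
    exact ⟨k, by linarith⟩
  have hbd : ∃ b : ℤ, ∀ z : ℤ, t z < x → z ≤ b := by
    obtain ⟨k, hk⟩ := (htop.eventually (eventually_ge_atTop x)).exists
    refine ⟨k, fun z hz => ?_⟩
    by_contra hzk
    push_neg at hzk
    exact absurd (hmono hzk.le) (by linarith [hk])
  obtain ⟨lb, hlb, hgr⟩ := Int.exists_greatest_of_bdd hbd hne
  refine ⟨lb, hlb, ?_⟩
  by_contra hc
  push_neg at hc
  have := hgr (lb + 1) hc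
  omega

lemma measurable_of_leftCont (φ : ℝ → ℝ)
    (hφ : ∀ x : ℝ, Tendsto φ (nhdsWithin x (Set.Iio x)) (nhds (φ x))) :
    Measurable φ := by
  set a : ℕ → ℝ → ℝ := fun n x => ((⌈(n + 1 : ℝ) * x⌉ : ℝ) - 1) / (n + 1) with ha
  have hmeas : ∀ n, Measurable fun x => φ (a n x) := by
    intro n
    have h1 : Measurable fun x : ℝ => (⌈(n + 1 : ℝ) * x⌉ : ℤ) :=
      Int.measurable_ceil.comp (measurable_const.mul measurable_id)
    have : (fun x => φ (a n x)) = (fun k : ℤ => φ (((k : ℝ) - 1) / (n + 1))) ∘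
        fun x : ℝ => (⌈(n + 1 : ℝ) * x⌉ : ℤ) := rfl
    rw [this]
    exact (measurable_from_top).comp h1
  have hlim : ∀ x : ℝ, Tendsto (fun n => φ (a n x)) atTop (nhds (φ x)) := by
    intro x
    have hn : ∀ n : ℕ, (0:ℝ) < n + 1 := fun n => by positivity
    have hlt : ∀ n : ℕ, a n x < x := by
      intro n
      rw [ha]
      have h1 : (⌈(n + 1 : ℝ) * x⌉ : ℝ) < (n+1) * x + 1 := Int.ceil_lt_add_one _
      rw [div_lt_iff₀ (hn n)]
      nlinarith [hn n]
    have hge : ∀ n : ℕ, x - 1 / (n+1) ≤ a n x := by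
      intro n
      rw [ha, le_div_iff₀ (hn n)]
      have h1 : (n + 1 : ℝ) * x ≤ (⌈(n + 1 : ℝ) * x⌉ : ℝ) := Int.le_ceil _
      have : (x - 1 / (n+1)) * (n+1) = (n+1) * x - 1 := by field_simp
      rw [this]
      linarith
    have htend : Tendsto (fun n => a n x) atTop (nhds x) := by
      have h1 : Tendsto (fun n : ℕ => x - 1 / (n+1 : ℝ)) atTop (nhds x) := by
        have := tendsto_one_div_add_atTop_nhds_zero_nat (𝕜 := ℝ)
        simpa using (tendsto_const_nhds (x := x)).sub this
      exact tendsto_of_tendsto_of_tendsto_of_le_of_le h1 tendsto_const_nhds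
        (fun n => hge n) (fun n => (hlt n).le)
    have htend' : Tendsto (fun n => a n x) atTop (nhdsWithin x (Set.Iio x)) :=
      tendsto_nhdsWithin_of_tendsto_nhds_of_eventually_within _ htend
        (Eventually.of_forall fun n => hlt n)
    exact (hφ x).comp htend'
  exact measurable_of_tendsto_metrizable hmeas
    (tendsto_pi_nhds.mpr hlim)

lemma II_of_bdd (φ : ℝ → ℝ) (hφ : Measurable φ) (M : ℝ) (hM : ∀ u, |φ u| ≤ M)
    (a b : ℝ) : IntervalIntegrable φ volume a b := by
  refine IntervalIntegrable.mono_fun' (g := fun _ => |M|)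
    (_root_.intervalIntegrable_const) hφ.aestronglyMeasurable.restrict ?_
  exact Eventually.of_forall fun u => by
    simp only [Real.norm_eq_abs]; exact (hM u).trans (le_abs_self M)

/-- From UAPD: uniform gap growth. -/
lemma uapd_gap (t : ℤ → ℝ) (hU : UAPD t) (c : ℝ) :
    ∃ j : ℤ, 0 < j ∧ ∀ m : ℤ, c < t (m + j) - t m := by
  obtain ⟨hmono, htop, hbot, hap⟩ := hU
  obtain ⟨P, ⟨N, hN, hPd⟩, hP⟩ := hap 1 one_pos
  obtain ⟨i₀, hi₀⟩ := Filter.eventually_atTop.1 (htop.eventually_ge_atTop (t N + c + 2))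
  refine ⟨max (i₀ - 1) 1, by positivity, fun m => ?_⟩
  set j : ℤ := max (i₀ - 1) 1 with hj
  have hj1 : 1 + j ≥ i₀ := by omega
  have h1j : t (1 + j) ≥ t N + c + 2 := hi₀ _ hj1
  obtain ⟨p, hpP, hp1, hp2⟩ := hPd (m - N)
  set k : ℤ := m - p with hk
  have hk1 : 1 ≤ k := by omega
  have hkN : k ≤ N := by omega
  have hap := hP p hpP j k
  have hkp : k + p = m := by omega
  rw [hkp] at hap
  have h1 : t (1 + j) ≤ t (k + j) := hmono.monotone (by omega)
  have h2 : t k ≤ t N := hmono.monotone hkN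
  have := abs_lt.1 hap
  have hadd : m + j = m + j := rfl
  linarith [this.1, this.2]

/-- Measure of the η-neighbourhood of the discontinuity set inside a window. -/
lemma bad_measure (t : ℤ → ℝ) (hmono : StrictMono t)
    (htop : Tendsto t atTop atTop) (hbot : Tendsto t atBot atBot)
    (w : ℝ) (hw : 0 < w) (j : ℕ) (hgap : ∀ m : ℤ, w + 2 < t (m + j) - t m)
    (η : ℝ) (hη : 0 < η) (hη1 : η ≤ 1) (x : ℝ) :
    volume ((⋃ k : ℤ, Icc (t k - η) (t k + η)) ∩ Icc x (x + w)) ≤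
      ENNReal.ofReal (2 * η * j) := by
  -- least k with x - 1 ≤ t k
  have hne : ∃ k : ℤ, x - 1 ≤ t k := by
    obtain ⟨k, hk⟩ := (htop.eventually_ge_atTop (x - 1)).exists
    exact ⟨k, hk⟩
  have hbd : ∃ b : ℤ, ∀ z : ℤ, x - 1 ≤ t z → b ≤ z := by
    obtain ⟨k, hk⟩ := (hbot.eventually (eventually_le_atBot (x - 2))).exists
    refine ⟨k + 1, fun z hz => ?_⟩
    by_contra hzk
    push_neg at hzk
    have : t z ≤ t k := hmono.monotone (by omega)
    linarith
  obtain ⟨k₀, hk₀, hleast⟩ := Int.exists_least_of_bdd hbd hne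
  have hsub : (⋃ k : ℤ, Icc (t k - η) (t k + η)) ∩ Icc x (x + w) ⊆
      ⋃ i ∈ Finset.range j, Icc (t (k₀ + i) - η) (t (k₀ + i) + η) := by
    rintro u ⟨hu1, hu2⟩
    obtain ⟨m, hm⟩ : ∃ m : ℤ, u ∈ Icc (t m - η) (t m + η) := by
      simpa using hu1
    obtain ⟨hux, huw⟩ := hu2
    obtain ⟨hm1, hm2⟩ := hm
    have htm1 : x - 1 ≤ t m := by linarith
    have htm2 : t m ≤ x + w + 1 := by linarith
    have hk0m : k₀ ≤ m := hleast m htm1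
    have hmj : m < k₀ + j := by
      by_contra hc
      push_neg at hc
      have h1 : t (k₀ + (j:ℤ)) ≤ t m := hmono.monotone hc
      have h2 := hgap k₀
      linarith
    simp only [Finset.mem_range, mem_iUnion, exists_prop]
    refine ⟨(m - k₀).toNat, by omega, ?_⟩
    have : (k₀ + ((m - k₀).toNat : ℤ)) = m := by omega
    rw [this]
    exact ⟨by linarith, by linarith⟩
  calc volume ((⋃ k : ℤ, Icc (t k - η) (t k + η)) ∩ Icc x (x + w))
      ≤ volume (⋃ i ∈ Finset.range j, Icc (t (k₀ + i) - η) (t (k₀ + i) + η)) :=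
        measure_mono hsub
    _ ≤ ∑ i ∈ Finset.range j, volume (Icc (t (k₀ + i) - η) (t (k₀ + i) + η)) :=
        measure_biUnion_finset_le _ _
    _ = ∑ _i ∈ Finset.range j, ENNReal.ofReal (2 * η) := by
        refine Finset.sum_congr rfl fun i _ => ?_
        rw [Real.volume_Icc]
        ring_nf
    _ ≤ ENNReal.ofReal (2 * η * j) := by
        rw [Finset.sum_const, Finset.card_range, nsmul_eq_mul]
        rw [← ENNReal.ofReal_natCast j, ← ENNReal.ofReal_mul (by positivity)]
        exact ENNReal.ofReal_le_ofReal (le_of_eq (by ring))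

/-- Split an interval integral of a nonnegative bounded function into good/bad parts. -/
lemma integral_abs_split (g : ℝ → ℝ) (hg : AEStronglyMeasurable g volume)
    (x w C c V : ℝ) (hw : 0 < w) (hC : 0 ≤ C) (hc : 0 ≤ c) (hV : 0 ≤ V)
    (B : Set ℝ) (hB : MeasurableSet B) (hgC : ∀ u, |g u| ≤ C)
    (hsmall : ∀ u ∈ Ioc x (x + w), u ∉ B → |g u| ≤ c)
    (hvol : volume (B ∩ Icc x (x + w)) ≤ ENNReal.ofReal V) :
    (∫ u in x..(x + w), |g u|) ≤ c * w + C * V := by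
  have hab : x ≤ x + w := by linarith
  have habs : AEStronglyMeasurable (fun u => |g u|) volume := by
    simpa [Real.norm_eq_abs] using hg.norm
  have hint : IntegrableOn (fun u => |g u|) (Ioc x (x + w)) volume := by
    refine Integrable.mono' (integrable_const C) habs.restrict ?_
    exact Eventually.of_forall fun u => by
      simp only [Real.norm_eq_abs, abs_abs]; exact hgC u
  rw [intervalIntegral.integral_of_le hab]
  have hdecomp : Ioc x (x + w) = (Ioc x (x + w) ∩ B) ∪ (Ioc x (x + w) \ B) :=
    (Set.inter_union_diff _ _).symm
  have hdisj : Disjoint (Ioc x (x + w) ∩ B) (Ioc x (x + w) \ B) :=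
    Set.disjoint_sdiff_right.mono_left Set.inter_subset_right
  have hmeas1 : MeasurableSet (Ioc x (x + w) ∩ B) := measurableSet_Ioc.inter hB
  have hmeas2 : MeasurableSet (Ioc x (x + w) \ B) := measurableSet_Ioc.diff hB
  have hint1 : IntegrableOn (fun u => |g u|) (Ioc x (x + w) ∩ B) volume :=
    hint.mono_set Set.inter_subset_left
  have hint2 : IntegrableOn (fun u => |g u|) (Ioc x (x + w) \ B) volume :=
    hint.mono_set Set.diff_subset
  have hfin1 : volume (Ioc x (x + w) ∩ B) < ⊤ :=
    lt_of_le_of_lt (measure_mono Set.inter_subset_left) (by rw [Real.volume_Ioc]; exact ENNReal.ofReal_lt_top)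
  have hfin2 : volume (Ioc x (x + w) \ B) < ⊤ :=
    lt_of_le_of_lt (measure_mono Set.diff_subset) (by rw [Real.volume_Ioc]; exact ENNReal.ofReal_lt_top)
  have e1 : (∫ u in (Ioc x (x + w) ∩ B), |g u|) ≤ C * V := by
    have h1 : ‖∫ u in (Ioc x (x + w) ∩ B), |g u|‖ ≤ C * (volume (Ioc x (x + w) ∩ B)).toReal := by
      refine norm_setIntegral_le_of_norm_le_const_ae' hfin1 ?_
      exact Eventually.of_forall fun u _ => by
        simp only [Real.norm_eq_abs, abs_abs]; exact hgC u
    have h2 : (volume (Ioc x (x + w) ∩ B)).toReal ≤ V := by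
      refine ENNReal.toReal_le_of_le_ofReal hV (le_trans (measure_mono ?_) hvol)
      exact fun u hu => ⟨hu.2, Set.Ioc_subset_Icc_self hu.1⟩
    calc (∫ u in (Ioc x (x + w) ∩ B), |g u|) ≤ ‖∫ u in (Ioc x (x + w) ∩ B), |g u|‖ :=
          le_abs_self _
      _ ≤ C * (volume (Ioc x (x + w) ∩ B)).toReal := h1
      _ ≤ C * V := by nlinarith [ENNReal.toReal_nonneg (a := volume (Ioc x (x + w) ∩ B))]
  have e2 : (∫ u in (Ioc x (x + w) \ B), |g u|) ≤ c * w := by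
    have h1 : ‖∫ u in (Ioc x (x + w) \ B), |g u|‖ ≤ c * (volume (Ioc x (x + w) \ B)).toReal := by
      refine norm_setIntegral_le_of_norm_le_const_ae' hfin2 ?_
      exact Eventually.of_forall fun u hu => by
        simp only [Real.norm_eq_abs, abs_abs]; exact hsmall u hu.1 hu.2
    have h2 : (volume (Ioc x (x + w) \ B)).toReal ≤ w := by
      refine ENNReal.toReal_le_of_le_ofReal hw.le (le_trans (measure_mono Set.diff_subset) ?_)
      rw [Real.volume_Ioc]
      exact ENNReal.ofReal_le_ofReal (by linarith)
    calc (∫ u in (Ioc x (x + w) \ B), |g u|) ≤ ‖∫ u in (Ioc x (x + w) \ B), |g u|‖ :=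
          le_abs_self _
      _ ≤ c * (volume (Ioc x (x + w) \ B)).toReal := h1
      _ ≤ c * w := by nlinarith [ENNReal.toReal_nonneg (a := volume (Ioc x (x + w) \ B))]
  calc (∫ u in Ioc x (x + w), |g u|)
      = (∫ u in (Ioc x (x + w) ∩ B), |g u|) + (∫ u in (Ioc x (x + w) \ B), |g u|) := by
        rw [← setIntegral_union hdisj hmeas2 hint1 hint2, ← hdecomp]
    _ ≤ c * w + C * V := by linarith

/-- Stepanov-type almost periods of a W-almost periodic function. -/
lemma stepanov_ap (h : ℝ) (hh : 0 < h) (t : ℤ → ℝ) (φ : ℝ → ℝ) (hW : WAP t φ)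
    (M : ℝ) (hM : ∀ u, |φ u| ≤ M) (hM1 : 1 ≤ M) (hmeas : Measurable φ)
    (j : ℕ) (hgap : ∀ m : ℤ, h + 2 < t (m + j) - t m)
    (δ : ℝ) (hδ : 0 < δ) :
    ∃ Γ : Set ℝ, RelDenseR Γ ∧ ∀ τ ∈ Γ, ∀ x : ℝ,
      (∫ u in x..(x + h), |φ (u + τ) - φ u|) ≤ δ := by
  obtain ⟨hU, hPC, hUC, hAP⟩ := hW
  obtain ⟨hmono, htop, hbot, _⟩ := hU
  set ε₀ : ℝ := min 1 (δ / (h + 4 * M * j + 1)) with hε₀def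
  have hMj : (0:ℝ) ≤ 4 * M * j := by positivity
  have hε₀pos : 0 < ε₀ := by
    apply lt_min one_pos
    apply div_pos hδ
    linarith
  have hε₀1 : ε₀ ≤ 1 := min_le_left _ _
  obtain ⟨Γ, hΓd, hΓ⟩ := hAP ε₀ hε₀pos
  refine ⟨Γ, hΓd, fun τ hτ x => ?_⟩
  set B : Set ℝ := ⋃ k : ℤ, Ioo (t k - ε₀) (t k + ε₀) with hBdef
  have hBmeas : MeasurableSet B := MeasurableSet.iUnion fun k => measurableSet_Ioo
  have hvol : volume (B ∩ Icc x (x + h)) ≤ ENNReal.ofReal (2 * ε₀ * j) := by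
    have hsub : B ∩ Icc x (x + h) ⊆ (⋃ k : ℤ, Icc (t k - ε₀) (t k + ε₀)) ∩ Icc x (x + h) :=
      Set.inter_subset_inter_left _ (Set.iUnion_mono fun k => Set.Ioo_subset_Icc_self)
    exact le_trans (measure_mono hsub) (bad_measure t hmono htop hbot h hh j hgap ε₀ hε₀pos hε₀1 x)
  have hg : AEStronglyMeasurable (fun u => φ (u + τ) - φ u) volume :=
    ((hmeas.comp (measurable_add_const τ)).sub hmeas).aestronglyMeasurable
  have hsplit := integral_abs_split (fun u => φ (u + τ) - φ u) hg x h (2 * M) ε₀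
      (2 * ε₀ * j) hh (by linarith) hε₀pos.le (by positivity) B hBmeas
      (fun u => by
        have := hM (u + τ); have := hM u
        calc |φ (u + τ) - φ u| ≤ |φ (u + τ)| + |φ u| := abs_sub _ _
          _ ≤ 2 * M := by linarith)
      (fun u _ huB => ?_) hvol
  · calc (∫ u in x..(x + h), |φ (u + τ) - φ u|) ≤ ε₀ * h + 2 * M * (2 * ε₀ * j) :=
        hsplit
      _ = ε₀ * (h + 4 * M * j) := by ring
      _ ≤ (δ / (h + 4 * M * j + 1)) * (h + 4 * M * j) := by
          have := min_le_right 1 (δ / (h + 4 * M * j + 1))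
          nlinarith
      _ ≤ δ := by
          rw [div_mul_eq_mul_div, div_le_iff₀ (by linarith)]
          nlinarith
  · -- good point estimate
    refine le_of_lt (hΓ τ hτ u ?_)
    intro k
    by_contra hc
    push_neg at hc
    rw [abs_lt] at hc
    exact huB (Set.mem_iUnion.mpr ⟨k, by constructor <;> linarith [hc.1, hc.2]⟩)

/-- Uniform L¹ continuity of translation for a W-almost periodic function. -/
lemma trans_cont (h : ℝ) (hh : 0 < h) (t : ℤ → ℝ) (φ : ℝ → ℝ) (hW : WAP t φ)
    (M : ℝ) (hM : ∀ u, |φ u| ≤ M) (hM1 : 1 ≤ M) (hmeas : Measurable φ)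
    (j : ℕ) (hgap : ∀ m : ℤ, h + 2 < t (m + j) - t m)
    (δ : ℝ) (hδ : 0 < δ) :
    ∃ ρ > (0:ℝ), ∀ σ : ℝ, |σ| ≤ ρ → ∀ x : ℝ,
      (∫ u in x..(x + h), |φ (u + σ) - φ u|) ≤ δ := by
  obtain ⟨hU, hPC, hUC, hAP⟩ := hW
  obtain ⟨hmono, htop, hbot, _⟩ := hU
  set ε₁ : ℝ := δ / (2 * (h + 1)) with hε₁def
  have hε₁pos : 0 < ε₁ := by positivity
  obtain ⟨δ₁, hδ₁pos, hδ₁⟩ := hUC ε₁ hε₁pos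
  set ρ : ℝ := min (min (δ₁ / 2) 1) (δ / (8 * M * j + 1)) with hρdef
  have hMj : (0:ℝ) ≤ 8 * M * j := by positivity
  have hρpos : 0 < ρ := by
    apply lt_min (lt_min (by linarith) one_pos)
    apply div_pos hδ; linarith
  have hρ1 : ρ ≤ 1 := le_trans (min_le_left _ _) (min_le_right _ _)
  refine ⟨ρ, hρpos, fun σ hσ x => ?_⟩
  set B : Set ℝ := ⋃ k : ℤ, Icc (t k - ρ) (t k + ρ) with hBdef
  have hBmeas : MeasurableSet B := MeasurableSet.iUnion fun k => measurableSet_Icc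
  have hvol : volume (B ∩ Icc x (x + h)) ≤ ENNReal.ofReal (2 * ρ * j) :=
    bad_measure t hmono htop hbot h hh j hgap ρ hρpos hρ1 x
  have hg : AEStronglyMeasurable (fun u => φ (u + σ) - φ u) volume :=
    ((hmeas.comp (measurable_add_const σ)).sub hmeas).aestronglyMeasurable
  have hsmall : ∀ u : ℝ, u ∉ B → |φ (u + σ) - φ u| ≤ ε₁ := by
    intro u huB
    have hdist : ∀ k : ℤ, ρ < |u - t k| := by
      intro k
      by_contra hc
      push_neg at hc
      rw [abs_le] at hc
      exact huB (Set.mem_iUnion.mpr ⟨k, by constructor <;> linarith [hc.1, hc.2]⟩)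
    obtain ⟨k, hk1, hk2⟩ := exists_mem_Ioc' t hmono.monotone htop hbot u
    have habs := abs_le.1 hσ
    have hd1 : ρ < u - t k := by
      have := hdist k
      rcases abs_cases (u - t k) with ⟨he, _⟩ | ⟨he, hneg⟩
      · linarith [this, he]
      · linarith
    have hd2 : ρ < t (k + 1) - u := by
      have := hdist (k + 1)
      rcases abs_cases (u - t (k + 1)) with ⟨he, hpos⟩ | ⟨he, _⟩
      · linarith
      · linarith
    have hu : u ∈ Ioc (t k) (t (k + 1)) := ⟨hk1, hk2⟩
    have huσ : u + σ ∈ Ioc (t k) (t (k + 1)) := ⟨by linarith, by linarith⟩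
    have := hδ₁ k (u + σ) huσ u hu (by
      rw [show u + σ - u = σ by ring]
      have : ρ < δ₁ := lt_of_le_of_lt (le_trans (min_le_left _ _) (min_le_left _ _))
        (by linarith)
      linarith [abs_le.1 hσ, abs_nonneg σ, lt_of_le_of_lt hσ this])
    exact this.le
  have hsplit := integral_abs_split (fun u => φ (u + σ) - φ u) hg x h (2 * M) ε₁
      (2 * ρ * j) hh (by linarith) hε₁pos.le (by positivity) B hBmeas
      (fun u => by
        have := hM (u + σ); have := hM u
        calc |φ (u + σ) - φ u| ≤ |φ (u + σ)| + |φ u| := abs_sub _ _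
          _ ≤ 2 * M := by linarith)
      (fun u _ huB => hsmall u huB) hvol
  calc (∫ u in x..(x + h), |φ (u + σ) - φ u|) ≤ ε₁ * h + 2 * M * (2 * ρ * j) := hsplit
    _ ≤ δ / 2 + δ / 2 := by
        have h1 : ε₁ * h ≤ δ / 2 := by
          rw [hε₁def, div_mul_eq_mul_div, div_le_div_iff₀ (by linarith) (by norm_num)]
          nlinarith
        have h2 : 2 * M * (2 * ρ * j) ≤ δ / 2 := by
          have hρle : ρ ≤ δ / (8 * M * j + 1) := min_le_right _ _
          have : 2 * M * (2 * ρ * j) = (4 * M * j) * ρ := by ring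
          rw [this]
          calc (4 * M * j) * ρ ≤ (4 * M * j) * (δ / (8 * M * j + 1)) := by nlinarith
            _ ≤ δ / 2 := by
                have hD : (0:ℝ) < 8 * M * j + 1 := by linarith
                rw [mul_div_assoc', div_le_div_iff₀ hD (by norm_num : (0:ℝ) < 2)]
                nlinarith
        linarith
    _ = δ := by ring

/-- Stepanov-type distance bound between two translates. -/
def SD (h : ℝ) (φ : ℝ → ℝ) (σ τ δ : ℝ) : Prop :=
  ∀ x : ℝ, (∫ u in x..(x + h), |φ (u + σ) - φ (u + τ)|) ≤ δ

lemma sdist_eq (φ : ℝ → ℝ) (σ τ x h : ℝ) :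
    (∫ u in x..(x + h), |φ (u + σ) - φ (u + τ)|) =
      ∫ u in (x + τ)..((x + τ) + h), |φ (u + (σ - τ)) - φ (u + 0)| := by
  have h1 := intervalIntegral.integral_comp_add_right (a := x) (b := x + h)
    (fun v => |φ (v + (σ - τ)) - φ (v + 0)|) τ
  have h2 : ∀ u : ℝ, |φ (u + τ + (σ - τ)) - φ (u + τ + 0)| = |φ (u + σ) - φ (u + τ)| := by
    intro u
    rw [show u + τ + (σ - τ) = u + σ by ring, show u + τ + 0 = u + τ by ring]
  simp only [h2] at h1
  rw [h1, show x + h + τ = (x + τ) + h by ring]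

lemma SD_shift' {h : ℝ} {φ : ℝ → ℝ} {σ τ δ : ℝ} : SD h φ σ τ δ ↔ SD h φ (σ - τ) 0 δ := by
  constructor
  · intro H y
    have he := sdist_eq φ σ τ (y - τ) h
    rw [show (y - τ) + τ = y by ring] at he
    rw [← he]
    exact H (y - τ)
  · intro H x
    rw [sdist_eq φ σ τ x h]
    exact H (x + τ)

lemma SD_symm {h : ℝ} {φ : ℝ → ℝ} {σ τ δ : ℝ} (H : SD h φ σ τ δ) : SD h φ τ σ δ := by
  intro x
  have := H x
  simpa [abs_sub_comm] using this

lemma SD_triangle {h : ℝ} (hh0 : 0 ≤ h) {φ : ℝ → ℝ} (hmeas : Measurable φ) {M : ℝ}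
    (hM : ∀ u, |φ u| ≤ M) {a b c δ₁ δ₂ : ℝ}
    (H1 : SD h φ a b δ₁) (H2 : SD h φ b c δ₂) : SD h φ a c (δ₁ + δ₂) := by
  intro x
  have hab : AEStronglyMeasurable (fun u : ℝ => |φ (u + a) - φ (u + b)|) volume := by
    have : Measurable fun u : ℝ => |φ (u + a) - φ (u + b)| :=
      ((hmeas.comp (measurable_add_const a)).sub (hmeas.comp (measurable_add_const b))).abs
    exact this.aestronglyMeasurable
  have II1 : IntervalIntegrable (fun u : ℝ => |φ (u + a) - φ (u + b)|) volume x (x + h) := by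
    refine II_of_bdd _ ?_ (2 * M) ?_ _ _
    · exact ((hmeas.comp (measurable_add_const a)).sub (hmeas.comp (measurable_add_const b))).abs
    · intro u
      rw [abs_abs]
      calc |φ (u + a) - φ (u + b)| ≤ |φ (u + a)| + |φ (u + b)| := abs_sub _ _
        _ ≤ 2 * M := by linarith [hM (u + a), hM (u + b)]
  have II2 : IntervalIntegrable (fun u : ℝ => |φ (u + b) - φ (u + c)|) volume x (x + h) := by
    refine II_of_bdd _ ?_ (2 * M) ?_ _ _
    · exact ((hmeas.comp (measurable_add_const b)).sub (hmeas.comp (measurable_add_const c))).abs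
    · intro u
      rw [abs_abs]
      calc |φ (u + b) - φ (u + c)| ≤ |φ (u + b)| + |φ (u + c)| := abs_sub _ _
        _ ≤ 2 * M := by linarith [hM (u + b), hM (u + c)]
  have II3 : IntervalIntegrable (fun u : ℝ => |φ (u + a) - φ (u + c)|) volume x (x + h) := by
    refine II_of_bdd _ ?_ (2 * M) ?_ _ _
    · exact ((hmeas.comp (measurable_add_const a)).sub (hmeas.comp (measurable_add_const c))).abs
    · intro u
      rw [abs_abs]
      calc |φ (u + a) - φ (u + c)| ≤ |φ (u + a)| + |φ (u + c)| := abs_sub _ _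
        _ ≤ 2 * M := by linarith [hM (u + a), hM (u + c)]
  have hh : x ≤ x + h := by linarith
  calc (∫ u in x..(x + h), |φ (u + a) - φ (u + c)|)
      ≤ ∫ u in x..(x + h), (|φ (u + a) - φ (u + b)| + |φ (u + b) - φ (u + c)|) := by
        refine intervalIntegral.integral_mono_on hh II3 (II1.add II2) fun u _ => ?_
        exact abs_sub_le _ _ _
    _ = (∫ u in x..(x + h), |φ (u + a) - φ (u + b)|) +
        ∫ u in x..(x + h), |φ (u + b) - φ (u + c)| :=
        intervalIntegral.integral_add II1 II2
    _ ≤ δ₁ + δ₂ := add_le_add (H1 x) (H2 x)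

/-- Total boundedness of translates in the Stepanov-type distance. -/
lemma sd_net (h : ℝ) (hh : 0 < h) (t : ℤ → ℝ) (φ : ℝ → ℝ) (hW : WAP t φ)
    (M : ℝ) (hM : ∀ u, |φ u| ≤ M) (hM1 : 1 ≤ M) (hmeas : Measurable φ)
    (j : ℕ) (hgap : ∀ m : ℤ, h + 2 < t (m + j) - t m)
    (δ : ℝ) (hδ : 0 < δ) :
    ∃ (n : ℕ) (c : ℕ → ℝ), ∀ s : ℝ, ∃ i : ℕ, i < n ∧ SD h φ s (c i) δ := by
  have hδ2 : 0 < δ / 2 := by linarith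
  obtain ⟨Γ, ⟨L, hL, hLd⟩, hΓ⟩ := stepanov_ap h hh t φ hW M hM hM1 hmeas j hgap (δ / 2) hδ2
  obtain ⟨ρ, hρ, hρc⟩ := trans_cont h hh t φ hW M hM hM1 hmeas j hgap (δ / 2) hδ2
  refine ⟨⌊L / ρ⌋₊ + 1, fun i => (i : ℝ) * ρ, fun s => ?_⟩
  obtain ⟨τ, hτΓ, hτ1, hτ2⟩ := hLd (s - L)
  rw [show s - L + L = s by ring] at hτ2
  set σ : ℝ := s - τ with hσdef
  have hσ0 : 0 ≤ σ := by simp [hσdef]; linarith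
  have hσL : σ ≤ L := by simp [hσdef]; linarith
  set i : ℕ := ⌊σ / ρ⌋₊ with hidef
  have hiρ : (i : ℝ) * ρ ≤ σ := by
    rw [hidef]
    calc (⌊σ / ρ⌋₊ : ℝ) * ρ ≤ (σ / ρ) * ρ := by
          have := Nat.floor_le (by positivity : (0:ℝ) ≤ σ / ρ)
          nlinarith
      _ = σ := by field_simp
  have hiρ2 : σ - (i : ℝ) * ρ ≤ ρ := by
    rw [hidef]
    have h1 : σ / ρ < (⌊σ / ρ⌋₊ : ℝ) + 1 := Nat.lt_floor_add_one _
    have h2 : σ < ((⌊σ / ρ⌋₊ : ℝ) + 1) * ρ := by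
      rw [← div_lt_iff₀ hρ] at *
      linarith
    nlinarith
  have hin : i < ⌊L / ρ⌋₊ + 1 := by
    rw [hidef]
    have hle : σ / ρ ≤ L / ρ := by gcongr
    have := Nat.floor_mono hle
    omega
  -- SD h φ s σ (δ/2) : since s - σ = τ is a Stepanov almost period
  have hsd1 : SD h φ s σ (δ / 2) := by
    rw [SD_shift']
    intro x
    have := hΓ τ hτΓ x
    rw [show s - σ = τ by rw [hσdef]; ring]
    simpa [add_zero] using this
  -- SD h φ σ (i ρ) (δ/2) : by uniform translation continuity
  have hsd2 : SD h φ σ ((i : ℝ) * ρ) (δ / 2) := by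
    rw [SD_shift']
    intro x
    have := hρc (σ - (i : ℝ) * ρ) (by rw [abs_of_nonneg (by linarith)]; linarith) x
    simpa [add_zero] using this
  refine ⟨i, hin, ?_⟩
  have := SD_triangle hh.le hmeas hM hsd1 hsd2
  simpa using this

lemma SD_mono {h : ℝ} {φ : ℝ → ℝ} {σ τ δ δ' : ℝ} (hδ : δ ≤ δ') (H : SD h φ σ τ δ) :
    SD h φ σ τ δ' := fun x => le_trans (H x) hδ

/-- Common Stepanov almost periods for the three functions. -/
lemma common_ap (h : ℝ) (hh : 0 < h) (t : ℤ → ℝ) (α γ xm : ℝ → ℝ)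
    (hα : WAP t α) (hγ : WAP t γ) (hxm : WAP t xm)
    (M : ℝ) (hM1 : 1 ≤ M)
    (hMα : ∀ u, |α u| ≤ M) (hMγ : ∀ u, |γ u| ≤ M) (hMxm : ∀ u, |xm u| ≤ M)
    (hmα : Measurable α) (hmγ : Measurable γ) (hmxm : Measurable xm)
    (j : ℕ) (hgap : ∀ m : ℤ, h + 2 < t (m + j) - t m)
    (δ : ℝ) (hδ : 0 < δ) :
    ∃ Γ : Set ℝ, RelDenseR Γ ∧
      ∀ τ ∈ Γ, SD h α τ 0 δ ∧ SD h γ τ 0 δ ∧ SD h xm τ 0 δ := by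
  have hδ4 : 0 < δ / 4 := by linarith
  obtain ⟨n₁, c₁, hc₁⟩ := sd_net h hh t α hα M hMα hM1 hmα j hgap (δ / 4) hδ4
  obtain ⟨n₂, c₂, hc₂⟩ := sd_net h hh t γ hγ M hMγ hM1 hmγ j hgap (δ / 4) hδ4
  obtain ⟨n₃, c₃, hc₃⟩ := sd_net h hh t xm hxm M hMxm hM1 hmxm j hgap (δ / 4) hδ4
  classical
  set Q : ℕ × ℕ × ℕ → ℝ → Prop := fun p s =>
    SD h α s (c₁ p.1) (δ / 4) ∧ SD h γ s (c₂ p.2.1) (δ / 4) ∧ SD h xm s (c₃ p.2.2) (δ / 4)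
    with hQdef
  set r : ℕ × ℕ × ℕ → ℝ := fun p => if hp : ∃ s, Q p s then hp.choose else 0 with hrdef
  have hr : ∀ p, (∃ s, Q p s) → Q p (r p) := by
    intro p hp
    rw [hrdef]
    simp only [dif_pos hp]
    exact hp.choose_spec
  have hex : ∀ s : ℝ, ∃ p : ℕ × ℕ × ℕ, p.1 < n₁ ∧ p.2.1 < n₂ ∧ p.2.2 < n₃ ∧ Q p s := by
    intro s
    obtain ⟨i₁, hi₁, H₁⟩ := hc₁ s
    obtain ⟨i₂, hi₂, H₂⟩ := hc₂ s
    obtain ⟨i₃, hi₃, H₃⟩ := hc₃ s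
    exact ⟨(i₁, i₂, i₃), hi₁, hi₂, hi₃, H₁, H₂, H₃⟩
  set T : Finset ℝ :=
    (Finset.range n₁ ×ˢ Finset.range n₂ ×ˢ Finset.range n₃).image r with hTdef
  set R : ℝ := ∑ d ∈ T, |d| with hRdef
  have hR0 : 0 ≤ R := Finset.sum_nonneg fun d _ => abs_nonneg d
  have hRb : ∀ d ∈ T, |d| ≤ R :=
    fun d hd => Finset.single_le_sum (fun e _ => abs_nonneg e) hd
  have key : ∀ s : ℝ, ∃ d ∈ T, SD h α s d (δ / 2) ∧ SD h γ s d (δ / 2) ∧ SD h xm s d (δ / 2) := by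
    intro s
    obtain ⟨p, hp1, hp2, hp3, hQ⟩ := hex s
    have hrp := hr p ⟨s, hQ⟩
    have hdT : r p ∈ T := by
      rw [hTdef]
      exact Finset.mem_image_of_mem r (by
        simp only [Finset.mem_product, Finset.mem_range]
        exact ⟨hp1, hp2, hp3⟩)
    refine ⟨r p, hdT, ?_, ?_, ?_⟩
    · have := SD_triangle hh.le hmα hMα hQ.1 (SD_symm hrp.1)
      exact SD_mono (by linarith) this
    · have := SD_triangle hh.le hmγ hMγ hQ.2.1 (SD_symm hrp.2.1)
      exact SD_mono (by linarith) this
    · have := SD_triangle hh.le hmxm hMxm hQ.2.2 (SD_symm hrp.2.2)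
      exact SD_mono (by linarith) this
  refine ⟨{τ | SD h α τ 0 δ ∧ SD h γ τ 0 δ ∧ SD h xm τ 0 δ}, ⟨2 * R + 1, by linarith, ?_⟩,
    fun τ hτ => hτ⟩
  intro a
  obtain ⟨d, hdT, H₁, H₂, H₃⟩ := key (a + R)
  refine ⟨a + R - d, ⟨?_, ?_, ?_⟩, ?_, ?_⟩
  · exact SD_mono (by linarith) (SD_shift'.mp H₁)
  · exact SD_mono (by linarith) (SD_shift'.mp H₂)
  · exact SD_mono (by linarith) (SD_shift'.mp H₃)
  · have := abs_le.1 (hRb d hdT); linarith [this.2]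
  · have := abs_le.1 (hRb d hdT); linarith [this.1]

lemma abs_exp_neg_sub : ∀ {a b : ℝ}, 0 ≤ a → 0 ≤ b → a ≤ b →
    |Real.exp (-a) - Real.exp (-b)| ≤ |a - b| := by
  intro a b ha hb hab
  have h1 : Real.exp (-b) ≤ Real.exp (-a) := Real.exp_le_exp.mpr (by linarith)
  rw [abs_of_nonneg (by linarith), abs_of_nonpos (by linarith)]
  have h2 : Real.exp (-b) = Real.exp (-a) * Real.exp (a - b) := by
    rw [← Real.exp_add]; ring_nf
  have h3 : a - b + 1 ≤ Real.exp (a - b) := Real.add_one_le_exp _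
  have h4 : 0 < Real.exp (-a) := Real.exp_pos _
  have h5 : Real.exp (-a) ≤ 1 := Real.exp_le_one_iff.mpr (by linarith)
  nlinarith

lemma abs_exp_neg_sub' {a b : ℝ} (ha : 0 ≤ a) (hb : 0 ≤ b) :
    |Real.exp (-a) - Real.exp (-b)| ≤ |a - b| := by
  rcases le_total a b with hab | hab
  · exact abs_exp_neg_sub ha hb hab
  · rw [abs_sub_comm, abs_sub_comm a b]
    exact abs_exp_neg_sub hb ha hab

/-- Main estimate: a common Stepanov almost period of `α, γ, xm` is a Bohr
almost period of `xi`, with explicit constant. -/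
lemma xi_estimate (h : ℝ) (hh : 0 < h) (α γ xm : ℝ → ℝ)
    (hmα : Measurable α) (hmγ : Measurable γ) (hmxm : Measurable xm)
    (M : ℝ) (hM1 : 1 ≤ M)
    (hMα : ∀ u, |α u| ≤ M) (hMγ : ∀ u, |γ u| ≤ M) (hMxm : ∀ u, |xm u| ≤ M)
    (hγpos : ∀ u, 0 < γ u)
    (xi : ℝ → ℝ)
    (hxi : ∀ s : ℝ, xi s = ∫ u in (s - h)..s, α u * xm u * Real.exp (-∫ r in u..s, γ r))
    (τ s δ : ℝ) (hδ0 : 0 ≤ δ)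
    (hSα : SD h α τ 0 δ) (hSγ : SD h γ τ 0 δ) (hSxm : SD h xm τ 0 δ) :
    |xi (s + τ) - xi s| ≤ δ * (2 * M + M ^ 2 * h) := by
  have hM0 : (0:ℝ) < M := by linarith
  have hIγ : ∀ a b : ℝ, IntervalIntegrable γ volume a b := II_of_bdd γ hmγ M hMγ
  have hmγτ : Measurable fun r => γ (r + τ) := hmγ.comp (measurable_add_const τ)
  have hIγτ : ∀ a b : ℝ, IntervalIntegrable (fun r => γ (r + τ)) volume a b :=
    II_of_bdd _ hmγτ M (fun u => hMγ (u + τ))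
  have hchg : ∀ v : ℝ, (∫ r in (v + τ)..(s + τ), γ r) = ∫ r in v..s, γ (r + τ) :=
    fun v => (intervalIntegral.integral_comp_add_right γ τ).symm
  -- rewrite the shifted xi
  have e1 : xi (s + τ) =
      ∫ v in (s - h)..s, α (v + τ) * xm (v + τ) * Real.exp (-∫ r in v..s, γ (r + τ)) := by
    rw [hxi (s + τ), show s + τ - h = (s - h) + τ by ring]
    rw [← intervalIntegral.integral_comp_add_right
      (fun u => α u * xm u * Real.exp (-∫ r in u..(s + τ), γ r)) τ]
    refine intervalIntegral.integral_congr fun v _ => ?_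
    simp only [hchg v]
  set Cγ : ℝ := ∫ r in (s - h)..s, |γ (r + τ) - γ r| with hCγdef
  have hIabsγ : IntervalIntegrable (fun r => |γ (r + τ) - γ r|) volume (s - h) s := by
    refine II_of_bdd _ ((hmγτ.sub hmγ).abs) (2 * M) (fun u => ?_) _ _
    rw [abs_abs]
    calc |γ (u + τ) - γ u| ≤ |γ (u + τ)| + |γ u| := abs_sub _ _
      _ ≤ 2 * M := by linarith [hMγ (u + τ), hMγ u]
  have hCγ0 : 0 ≤ Cγ := intervalIntegral.integral_nonneg (by linarith) fun r _ => abs_nonneg _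
  have hCγδ : Cγ ≤ δ := by
    have := hSγ (s - h)
    simp only [add_zero] at this
    rw [show s - h + h = s by ring] at this
    exact this
  -- continuous-form primitives for integrability
  set G : ℝ → ℝ := fun y => ∫ r in (0:ℝ)..y, γ r with hGdef
  set Gτ : ℝ → ℝ := fun y => ∫ r in (0:ℝ)..y, γ (r + τ) with hGτdef
  have hGc : Continuous G := intervalIntegral.continuous_primitive (fun a b => hIγ a b) 0
  have hGτc : Continuous Gτ := intervalIntegral.continuous_primitive (fun a b => hIγτ a b) 0
  have hGv : ∀ v : ℝ, (∫ r in v..s, γ r) = G s - G v :=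
    fun v => (intervalIntegral.integral_interval_sub_left (hIγ 0 s) (hIγ 0 v)).symm
  have hGτv : ∀ v : ℝ, (∫ r in v..s, γ (r + τ)) = Gτ s - Gτ v :=
    fun v => (intervalIntegral.integral_interval_sub_left (hIγτ 0 s) (hIγτ 0 v)).symm
  set g₁ : ℝ → ℝ := fun v => α (v + τ) * xm (v + τ) * Real.exp (-∫ r in v..s, γ (r + τ))
    with hg₁def
  set g₂ : ℝ → ℝ := fun v => α v * xm v * Real.exp (-∫ r in v..s, γ r) with hg₂def
  have hg₁eq : g₁ = fun v => α (v + τ) * xm (v + τ) * Real.exp (Gτ v - Gτ s) := by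
    funext v; rw [hg₁def]; simp only; rw [hGτv v, neg_sub]
  have hg₂eq : g₂ = fun v => α v * xm v * Real.exp (G v - G s) := by
    funext v; rw [hg₂def]; simp only; rw [hGv v, neg_sub]
  have hIg₁ : IntervalIntegrable g₁ volume (s - h) s := by
    rw [hg₁eq]
    have hcont : Continuous fun v => Real.exp (Gτ v - Gτ s) :=
      Real.continuous_exp.comp (hGτc.sub continuous_const)
    refine IntervalIntegrable.mono_fun' (g := fun v => M ^ 2 * Real.exp (Gτ v - Gτ s))
      ((continuous_const.mul hcont).intervalIntegrable _ _) ?_ ?_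
    · exact (((hmα.comp (measurable_add_const τ)).mul
        (hmxm.comp (measurable_add_const τ))).mul hcont.measurable).aestronglyMeasurable.restrict
    · refine Eventually.of_forall fun v => ?_
      have he : 0 < Real.exp (Gτ v - Gτ s) := Real.exp_pos _
      simp only [Real.norm_eq_abs, abs_mul, abs_of_pos he]
      have h1 := hMα (v + τ); have h2 := hMxm (v + τ)
      have hm : |α (v + τ)| * |xm (v + τ)| ≤ M * M :=
        mul_le_mul h1 h2 (abs_nonneg _) hM0.le
      calc |α (v + τ)| * |xm (v + τ)| * Real.exp (Gτ v - Gτ s)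
          ≤ (M * M) * Real.exp (Gτ v - Gτ s) := mul_le_mul_of_nonneg_right hm he.le
        _ = M ^ 2 * Real.exp (Gτ v - Gτ s) := by ring
  have hIg₂ : IntervalIntegrable g₂ volume (s - h) s := by
    rw [hg₂eq]
    have hcont : Continuous fun v => Real.exp (G v - G s) :=
      Real.continuous_exp.comp (hGc.sub continuous_const)
    refine IntervalIntegrable.mono_fun' (g := fun v => M ^ 2 * Real.exp (G v - G s))
      ((continuous_const.mul hcont).intervalIntegrable _ _) ?_ ?_
    · exact ((hmα.mul hmxm).mul hcont.measurable).aestronglyMeasurable.restrict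
    · refine Eventually.of_forall fun v => ?_
      have he : 0 < Real.exp (G v - G s) := Real.exp_pos _
      simp only [Real.norm_eq_abs, abs_mul, abs_of_pos he]
      have h1 := hMα v; have h2 := hMxm v
      have hm : |α v| * |xm v| ≤ M * M :=
        mul_le_mul h1 h2 (abs_nonneg _) hM0.le
      calc |α v| * |xm v| * Real.exp (G v - G s)
          ≤ (M * M) * Real.exp (G v - G s) := mul_le_mul_of_nonneg_right hm he.le
        _ = M ^ 2 * Real.exp (G v - G s) := by ring
  -- pointwise bound
  set bfun : ℝ → ℝ := fun v =>
    M * |xm (v + τ) - xm v| + M * |α (v + τ) - α v| + M ^ 2 * Cγ with hbdef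
  have hpt : ∀ v ∈ Icc (s - h) s, |g₁ v - g₂ v| ≤ bfun v := by
    rintro v ⟨hv1, hv2⟩
    have hI₁0 : 0 ≤ ∫ r in v..s, γ (r + τ) :=
      intervalIntegral.integral_nonneg hv2 fun r _ => (hγpos (r + τ)).le
    have hI₂0 : 0 ≤ ∫ r in v..s, γ r :=
      intervalIntegral.integral_nonneg hv2 fun r _ => (hγpos r).le
    have hE₁pos : 0 < Real.exp (-∫ r in v..s, γ (r + τ)) := Real.exp_pos _
    have hE₁le : Real.exp (-∫ r in v..s, γ (r + τ)) ≤ 1 :=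
      Real.exp_le_one_iff.mpr (by linarith)
    have hdiffI : |(∫ r in v..s, γ (r + τ)) - ∫ r in v..s, γ r| ≤ Cγ := by
      rw [← intervalIntegral.integral_sub (hIγτ v s) (hIγ v s)]
      calc |∫ r in v..s, (γ (r + τ) - γ r)| ≤ ∫ r in v..s, |γ (r + τ) - γ r| :=
            intervalIntegral.abs_integral_le_integral_abs hv2
        _ ≤ Cγ := by
            rw [hCγdef]
            refine intervalIntegral.integral_mono_interval hv1 hv2 le_rfl ?_ hIabsγ
            exact Eventually.of_forall fun r => abs_nonneg _
    have hexp : |Real.exp (-∫ r in v..s, γ (r + τ)) - Real.exp (-∫ r in v..s, γ r)| ≤ Cγ :=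
      le_trans (abs_exp_neg_sub' hI₁0 hI₂0) hdiffI
    have hprod : |α (v + τ) * xm (v + τ) - α v * xm v| ≤
        M * |xm (v + τ) - xm v| + M * |α (v + τ) - α v| := by
      have hid : α (v + τ) * xm (v + τ) - α v * xm v =
          α (v + τ) * (xm (v + τ) - xm v) + xm v * (α (v + τ) - α v) := by ring
      rw [hid]
      calc |α (v + τ) * (xm (v + τ) - xm v) + xm v * (α (v + τ) - α v)|
          ≤ |α (v + τ) * (xm (v + τ) - xm v)| + |xm v * (α (v + τ) - α v)| := abs_add_le _ _
        _ = |α (v + τ)| * |xm (v + τ) - xm v| + |xm v| * |α (v + τ) - α v| := by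
            rw [abs_mul, abs_mul]
        _ ≤ M * |xm (v + τ) - xm v| + M * |α (v + τ) - α v| := by
            have := hMα (v + τ); have := hMxm v
            have := abs_nonneg (xm (v + τ) - xm v); have := abs_nonneg (α (v + τ) - α v)
            nlinarith
    have hid2 : g₁ v - g₂ v =
        (α (v + τ) * xm (v + τ) - α v * xm v) * Real.exp (-∫ r in v..s, γ (r + τ)) +
        (α v * xm v) * (Real.exp (-∫ r in v..s, γ (r + τ)) - Real.exp (-∫ r in v..s, γ r)) := by
      rw [hg₁def, hg₂def]; ring
    rw [hid2, hbdef]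
    have haxm : |α v * xm v| ≤ M ^ 2 := by
      rw [abs_mul]
      have := hMα v; have := hMxm v
      nlinarith [abs_nonneg (α v), abs_nonneg (xm v)]
    calc |(α (v + τ) * xm (v + τ) - α v * xm v) * Real.exp (-∫ r in v..s, γ (r + τ)) +
        (α v * xm v) * (Real.exp (-∫ r in v..s, γ (r + τ)) - Real.exp (-∫ r in v..s, γ r))|
        ≤ |(α (v + τ) * xm (v + τ) - α v * xm v)| * |Real.exp (-∫ r in v..s, γ (r + τ))| +
          |α v * xm v| * |Real.exp (-∫ r in v..s, γ (r + τ)) - Real.exp (-∫ r in v..s, γ r)| := by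
          calc _ ≤ _ := abs_add_le _ _
            _ = _ := by rw [abs_mul, abs_mul]
      _ ≤ (M * |xm (v + τ) - xm v| + M * |α (v + τ) - α v|) * 1 + M ^ 2 * Cγ := by
          have h1 := abs_nonneg (α (v + τ) * xm (v + τ) - α v * xm v)
          have h2 : |Real.exp (-∫ r in v..s, γ (r + τ))| ≤ 1 := by
            rw [abs_of_pos hE₁pos]; exact hE₁le
          have h3 := abs_nonneg (Real.exp (-∫ r in v..s, γ (r + τ)) -
            Real.exp (-∫ r in v..s, γ r))
          have h4 := abs_nonneg (α v * xm v)
          have h5 := abs_nonneg (Real.exp (-∫ r in v..s, γ (r + τ)))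
          nlinarith [mul_le_mul hprod h2 h5 (by positivity : (0:ℝ) ≤ M * |xm (v + τ) - xm v| + M * |α (v + τ) - α v|)]
      _ = M * |xm (v + τ) - xm v| + M * |α (v + τ) - α v| + M ^ 2 * Cγ := by ring
  -- integrate the bound
  have hIxm : IntervalIntegrable (fun v => |xm (v + τ) - xm v|) volume (s - h) s := by
    refine II_of_bdd _ (((hmxm.comp (measurable_add_const τ)).sub hmxm).abs) (2 * M)
      (fun u => ?_) _ _
    rw [abs_abs]
    calc |xm (u + τ) - xm u| ≤ |xm (u + τ)| + |xm u| := abs_sub _ _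
      _ ≤ 2 * M := by linarith [hMxm (u + τ), hMxm u]
  have hIα : IntervalIntegrable (fun v => |α (v + τ) - α v|) volume (s - h) s := by
    refine II_of_bdd _ (((hmα.comp (measurable_add_const τ)).sub hmα).abs) (2 * M)
      (fun u => ?_) _ _
    rw [abs_abs]
    calc |α (u + τ) - α u| ≤ |α (u + τ)| + |α u| := abs_sub _ _
      _ ≤ 2 * M := by linarith [hMα (u + τ), hMα u]
  have hIb : IntervalIntegrable bfun volume (s - h) s := by
    rw [hbdef]
    exact ((hIxm.const_mul M).add (hIα.const_mul M)).add (intervalIntegrable_const)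
  have hsh : s - h ≤ s := by linarith
  have hΔ : xi (s + τ) - xi s = ∫ v in (s - h)..s, (g₁ v - g₂ v) := by
    rw [e1, hxi s, ← intervalIntegral.integral_sub hIg₁ hIg₂]
  have hSxm' : (∫ v in (s - h)..s, |xm (v + τ) - xm v|) ≤ δ := by
    have := hSxm (s - h)
    simp only [add_zero] at this
    rw [show s - h + h = s by ring] at this
    exact this
  have hSα' : (∫ v in (s - h)..s, |α (v + τ) - α v|) ≤ δ := by
    have := hSα (s - h)
    simp only [add_zero] at this
    rw [show s - h + h = s by ring] at this
    exact this
  calc |xi (s + τ) - xi s| = |∫ v in (s - h)..s, (g₁ v - g₂ v)| := by rw [hΔ]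
    _ ≤ ∫ v in (s - h)..s, |g₁ v - g₂ v| :=
        intervalIntegral.abs_integral_le_integral_abs hsh
    _ ≤ ∫ v in (s - h)..s, bfun v := by
        refine intervalIntegral.integral_mono_on hsh ((hIg₁.sub hIg₂).abs) hIb hpt
    _ = M * (∫ v in (s - h)..s, |xm (v + τ) - xm v|) +
        M * (∫ v in (s - h)..s, |α (v + τ) - α v|) + (s - (s - h)) * (M ^ 2 * Cγ) := by
        rw [hbdef]
        rw [intervalIntegral.integral_add ((hIxm.const_mul M).add (hIα.const_mul M))
          intervalIntegrable_const]
        rw [intervalIntegral.integral_add (hIxm.const_mul M) (hIα.const_mul M)]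
        rw [intervalIntegral.integral_const_mul, intervalIntegral.integral_const_mul,
          intervalIntegral.integral_const, smul_eq_mul]
    _ ≤ M * δ + M * δ + h * (M ^ 2 * δ) := by
        have h1 : s - (s - h) = h := by ring
        rw [h1]
        have := mul_le_mul_of_nonneg_left hSxm' hM0.le
        have := mul_le_mul_of_nonneg_left hSα' hM0.le
        have hM2 : (0:ℝ) < M ^ 2 := by positivity
        have h6 : h * (M ^ 2 * Cγ) ≤ h * (M ^ 2 * δ) :=
          mul_le_mul_of_nonneg_left (mul_le_mul_of_nonneg_left hCγδ hM2.le) hh.le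
        linarith
    _ = δ * (2 * M + M ^ 2 * h) := by ring

lemma xi_continuous (h : ℝ) (α γ xm : ℝ → ℝ)
    (hmα : Measurable α) (hmγ : Measurable γ) (hmxm : Measurable xm)
    (M : ℝ) (hM1 : 1 ≤ M)
    (hMα : ∀ u, |α u| ≤ M) (hMγ : ∀ u, |γ u| ≤ M) (hMxm : ∀ u, |xm u| ≤ M)
    (xi : ℝ → ℝ)
    (hxi : ∀ s : ℝ, xi s = ∫ u in (s - h)..s, α u * xm u * Real.exp (-∫ r in u..s, γ r)) :
    Continuous xi := by
  have hM0 : (0:ℝ) < M := by linarith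
  have hIγ : ∀ a b : ℝ, IntervalIntegrable γ volume a b := II_of_bdd γ hmγ M hMγ
  set G : ℝ → ℝ := fun y => ∫ r in (0:ℝ)..y, γ r with hGdef
  have hGc : Continuous G := intervalIntegral.continuous_primitive (fun a b => hIγ a b) 0
  have hGv : ∀ s u : ℝ, (∫ r in u..s, γ r) = G s - G u :=
    fun s u => (intervalIntegral.integral_interval_sub_left (hIγ 0 s) (hIγ 0 u)).symm
  have hexpc : Continuous fun u => Real.exp (G u) := Real.continuous_exp.comp hGc
  have hIH : ∀ a b : ℝ, IntervalIntegrable (fun u => α u * xm u * Real.exp (G u)) volume a b := by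
    intro a b
    refine IntervalIntegrable.mono_fun' (g := fun u => M ^ 2 * Real.exp (G u))
      ((continuous_const.mul hexpc).intervalIntegrable _ _) ?_ ?_
    · exact ((hmα.mul hmxm).mul hexpc.measurable).aestronglyMeasurable.restrict
    · refine Eventually.of_forall fun v => ?_
      have he : 0 < Real.exp (G v) := Real.exp_pos _
      simp only [Real.norm_eq_abs, abs_mul, abs_of_pos he]
      have h1 := hMα v; have h2 := hMxm v
      have hm : |α v| * |xm v| ≤ M * M := mul_le_mul h1 h2 (abs_nonneg _) hM0.le
      calc |α v| * |xm v| * Real.exp (G v) ≤ (M * M) * Real.exp (G v) :=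
            mul_le_mul_of_nonneg_right hm he.le
        _ = M ^ 2 * Real.exp (G v) := by ring
  set H : ℝ → ℝ := fun y => ∫ u in (0:ℝ)..y, α u * xm u * Real.exp (G u) with hHdef
  have hHc : Continuous H := intervalIntegral.continuous_primitive (fun a b => hIH a b) 0
  have hxieq : xi = fun s => (H s - H (s - h)) * Real.exp (-G s) := by
    funext s
    rw [hxi s]
    have e : ∀ u : ℝ, α u * xm u * Real.exp (-∫ r in u..s, γ r) =
        (α u * xm u * Real.exp (G u)) * Real.exp (-G s) := by
      intro u
      rw [hGv s u, show -(G s - G u) = G u + -G s by ring, Real.exp_add]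
      ring
    rw [intervalIntegral.integral_congr (fun u _ => e u)]
    rw [intervalIntegral.integral_mul_const]
    rw [← intervalIntegral.integral_interval_sub_left (hIH 0 s) (hIH 0 (s - h))]
  rw [hxieq]
  exact ((hHc.sub (hHc.comp (continuous_id.sub continuous_const))).mul
    (Real.continuous_exp.comp hGc.neg))

/-- **Bohr almost periodicity of the immature population (20).** If `α, γ, x_m` are
bounded W-almost periodic piecewise continuous functions with common discontinuity
sequence `{t_k}` with uniformly almost periodic differences, `α` and `γ` positive, then
`x_i(t) = ∫_{t-h}^t α(s) x_m(s) e^{-∫_s^t γ} ds` is continuous and Bohr almost periodic. -/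
theorem immature_bohr_almost_periodic (h : ℝ) (hh : 0 < h) (t : ℤ → ℝ)
    (α γ xm : ℝ → ℝ)
    (hα : WAP t α) (hγ : WAP t γ) (hxm : WAP t xm)
    (hαpos : ∀ s : ℝ, 0 < α s) (hγpos : ∀ s : ℝ, 0 < γ s)
    (hbd : ∃ M : ℝ, ∀ s : ℝ, |α s| ≤ M ∧ |γ s| ≤ M ∧ |xm s| ≤ M)
    (xi : ℝ → ℝ)
    (hxi : ∀ s : ℝ, xi s = ∫ u in (s - h)..s, α u * xm u * Real.exp (-∫ r in u..s, γ r)) :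
    Continuous xi ∧
      ∀ ε > (0 : ℝ), ∃ Γ : Set ℝ, RelDenseR Γ ∧
        ∀ τ ∈ Γ, ∀ s : ℝ, |xi (s + τ) - xi s| < ε := by
  obtain ⟨M₀, hM₀⟩ := hbd
  set M : ℝ := max M₀ 1 with hMdef
  have hM1 : 1 ≤ M := le_max_right _ _
  have hMα : ∀ u, |α u| ≤ M := fun u => le_trans (hM₀ u).1 (le_max_left _ _)
  have hMγ : ∀ u, |γ u| ≤ M := fun u => le_trans (hM₀ u).2.1 (le_max_left _ _)
  have hMxm : ∀ u, |xm u| ≤ M := fun u => le_trans (hM₀ u).2.2 (le_max_left _ _)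
  have hmα : Measurable α := measurable_of_leftCont α hα.2.1.2.1
  have hmγ : Measurable γ := measurable_of_leftCont γ hγ.2.1.2.1
  have hmxm : Measurable xm := measurable_of_leftCont xm hxm.2.1.2.1
  obtain ⟨j₀, hj₀pos, hj₀⟩ := uapd_gap t hα.1 (h + 2)
  set j : ℕ := j₀.toNat with hjdef
  have hgap : ∀ m : ℤ, h + 2 < t (m + j) - t m := by
    intro m
    have : ((j : ℤ) : ℤ) = j₀ := by omega
    rw [show (m + (j:ℤ)) = m + j₀ by omega]
    exact hj₀ m
  refine ⟨xi_continuous h α γ xm hmα hmγ hmxm M hM1 hMα hMγ hMxm xi hxi, ?_⟩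
  intro ε hε
  set K : ℝ := 2 * M + M ^ 2 * h with hKdef
  have hK0 : 0 < K := by
    have : (0:ℝ) < M ^ 2 * h := by positivity
    have : (0:ℝ) < 2 * M := by linarith
    rw [hKdef]; linarith
  set δ : ℝ := ε / (K + 1) with hδdef
  have hδ0 : 0 < δ := by positivity
  obtain ⟨Γ, hΓd, hΓ⟩ := common_ap h hh t α γ xm hα hγ hxm M hM1 hMα hMγ hMxm
    hmα hmγ hmxm j hgap δ hδ0
  refine ⟨Γ, hΓd, fun τ hτ s => ?_⟩
  obtain ⟨hSα, hSγ, hSxm⟩ := hΓ τ hτ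
  have hest := xi_estimate h hh α γ xm hmα hmγ hmxm M hM1 hMα hMγ hMxm hγpos xi hxi
    τ s δ hδ0.le hSα hSγ hSxm
  calc |xi (s + τ) - xi s| ≤ δ * K := hest
    _ < ε := by
      rw [hδdef, div_mul_eq_mul_div, div_lt_iff₀ (by linarith)]
      nlinarith
end
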